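/- arXiv:1904.03213 — 2 statements merged into one kernel-verified Lean document; each statement's English description precedes it below -/
import Mathlib

section
/- Let Φ be a completely positive map given by Φ(Y) = Σ_{i=1}^k A_i Y A_i* with A_i ∈ ℝ^{m×n}, and suppose the operator (A₁,…,A_k) is ε-nearly doubly balanced with size s = Σᵢ tr(A_i A_i*). Then the largest singular value of the natural matrix representation M = Σᵢ A_i ⊗ A_i satisfies σ₁(M) ≤ (1+ε)·s/√(mn). -/
open Matrix Kronecker

/-- The list of singular values of a real matrix, in non-increasing order. -/
noncomputable def svList {m n : Type*} [Fintype m] [Fintype n] [DecidableEq n]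
    (A : Matrix m n ℝ) : List ℝ :=
  ((Finset.univ.val.map fun i =>
      Real.sqrt ((show (Aᵀ * A).IsHermitian by
        simpa using Matrix.isHermitian_conjTranspose_mul_self A).eigenvalues i)).toList).insertionSort
    (· ≥ ·)

/-- `sv A k` is the `k`-th largest singular value of `A` (1-indexed). -/
noncomputable def sv {m n : Type*} [Fintype m] [Fintype n] [DecidableEq n]
    (A : Matrix m n ℝ) (k : ℕ) : ℝ :=
  (svList A).getD (k - 1) 0

theorem trace_XBX {m' n' : Type*} [Fintype m'] [Fintype n'] (B : Matrix m' m' ℝ)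
    (X : Matrix m' n' ℝ) :
    Matrix.trace (Xᵀ * B * X) = ∑ j, (fun i => X i j) ⬝ᵥ (B *ᵥ fun i => X i j) := by
  simp only [Matrix.trace, Matrix.mul_apply, Matrix.diag, dotProduct, Matrix.mulVec,
    Finset.mul_sum, Finset.sum_mul, Matrix.transpose_apply]
  refine Finset.sum_congr rfl fun x _ => ?_
  rw [Finset.sum_comm]
  exact Finset.sum_congr rfl fun i _ => Finset.sum_congr rfl fun i' _ => by ring

theorem trace_frob {m' n' : Type*} [Fintype m'] [Fintype n'] (X W : Matrix m' n' ℝ) :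
    Matrix.trace (Xᵀ * W) = ∑ pj : m' × n', X pj.1 pj.2 * W pj.1 pj.2 := by
  simp only [Matrix.trace, Matrix.mul_apply, Matrix.diag, Matrix.transpose_apply,
    Fintype.sum_prod_type]
  rw [Finset.sum_comm]

theorem qf_le {N : Type*} [Fintype N] [DecidableEq N] {B : Matrix N N ℝ} {c : ℝ}
    (h : ((c • (1:Matrix N N ℝ)) - B).PosSemidef) (x : N → ℝ) :
    x ⬝ᵥ (B *ᵥ x) ≤ c * (x ⬝ᵥ x) := by
  have h2 := h.dotProduct_mulVec_nonneg x
  simp only [star_trivial, Matrix.sub_mulVec, Matrix.smul_mulVec, Matrix.one_mulVec,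
    dotProduct_sub, dotProduct_smul, smul_eq_mul] at h2
  linarith

theorem eig_le {N : Type*} [Fintype N] [DecidableEq N] {B : Matrix N N ℝ} (hB : B.IsHermitian)
    {c : ℝ} (h : ((c • (1:Matrix N N ℝ)) - B).PosSemidef) (i : N) :
    hB.eigenvalues i ≤ c := by
  set u : N → ℝ := ⇑(hB.eigenvectorBasis i) with hu
  have hBu : B *ᵥ u = hB.eigenvalues i • u := hB.mulVec_eigenvectorBasis i
  have hqf := qf_le h u
  rw [hBu, dotProduct_smul, smul_eq_mul] at hqf
  have hune : u ≠ 0 := by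
    have := hB.eigenvectorBasis.orthonormal.ne_zero i
    intro hc
    apply this
    ext j
    exact congrFun hc j
  have hpos : 0 < u ⬝ᵥ u := by
    rcases Function.ne_iff.mp hune with ⟨j, hj⟩
    simp only [Pi.zero_apply] at hj
    have : (0:ℝ) < u j ^ 2 := pow_two_pos_of_ne_zero hj
    calc (0:ℝ) < u j ^ 2 := this
      _ ≤ u ⬝ᵥ u := by
        rw [dotProduct]
        refine Finset.single_le_sum (f := fun j => u j * u j)
          (fun _ _ => mul_self_nonneg _) (Finset.mem_univ j) |>.trans_eq' ?_
        ring
  exact le_of_mul_le_mul_right hqf hpos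

theorem mulVec_kron {m n k : ℕ} (A : Fin k → Matrix (Fin m) (Fin n) ℝ)
    (v : Fin n × Fin n → ℝ) (ij : Fin m × Fin m) :
    ((∑ i, A i ⊗ₖ A i) *ᵥ v) ij =
      (∑ l, A l * (Matrix.of fun p q => v (p,q)) * (A l)ᵀ) ij.1 ij.2 := by
  obtain ⟨i, j⟩ := ij
  simp only [Matrix.mulVec, dotProduct, Matrix.sum_apply, Matrix.kroneckerMap_apply,
    Matrix.mul_apply, Matrix.transpose_apply, Matrix.of_apply, Finset.sum_mul, Finset.mul_sum]
  rw [Finset.sum_comm]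
  refine Finset.sum_congr rfl fun l _ => ?_
  rw [Fintype.sum_prod_type]
  rw [Finset.sum_comm]
  exact Finset.sum_congr rfl fun q _ => Finset.sum_congr rfl fun p _ => by ring

theorem dotProduct_sum' {n' k : ℕ} (x : Fin n' → ℝ) (w : Fin k → (Fin n' → ℝ)) :
    x ⬝ᵥ (∑ l, w l) = ∑ l, x ⬝ᵥ w l := by
  simp only [dotProduct, Finset.sum_apply, Finset.mul_sum]
  rw [Finset.sum_comm]

theorem sum_mulVec' {m' n' k : ℕ} (f : Fin k → Matrix (Fin m') (Fin n') ℝ) (x : Fin n' → ℝ) :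
    (∑ l, f l) *ᵥ x = ∑ l, (f l) *ᵥ x := by
  ext i
  simp [Matrix.mulVec, dotProduct, Matrix.sum_apply, Finset.sum_mul, Finset.sum_apply]
  rw [Finset.sum_comm]

/-- for an ε-nearly doubly balanced operator `(A₁, …, A_k)` of size `s`,
the natural matrix representation `M = Σᵢ Aᵢ ⊗ Aᵢ` satisfies
`σ₁(M) ≤ (1+ε) s / √(mn)`. -/
theorem stmt10 {m n k : ℕ} (hm : 0 < m) (hn : 0 < n)
    (A : Fin k → Matrix (Fin m) (Fin n) ℝ) (ε : ℝ)
    (s : ℝ) (hs : s = ∑ i, Matrix.trace (A i * (A i)ᵀ))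
    (hleft1 : (∑ i, A i * (A i)ᵀ - ((1 - ε) * (s / m)) • (1 : Matrix (Fin m) (Fin m) ℝ)).PosSemidef)
    (hleft2 : (((1 + ε) * (s / m)) • (1 : Matrix (Fin m) (Fin m) ℝ) - ∑ i, A i * (A i)ᵀ).PosSemidef)
    (hright1 : (∑ i, (A i)ᵀ * A i - ((1 - ε) * (s / n)) • (1 : Matrix (Fin n) (Fin n) ℝ)).PosSemidef)
    (hright2 : (((1 + ε) * (s / n)) • (1 : Matrix (Fin n) (Fin n) ℝ) - ∑ i, (A i)ᵀ * A i).PosSemidef) :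
    sv (∑ i, A i ⊗ₖ A i) 1 ≤ (1 + ε) * s / Real.sqrt (m * n) := by
  have hm0 : (0:ℝ) < m := by exact_mod_cast hm
  have hn0 : (0:ℝ) < n := by exact_mod_cast hn
  obtain ⟨M, hM⟩ : ∃ M', M' = ∑ i, A i ⊗ₖ A i := ⟨_, rfl⟩
  obtain ⟨B, hB⟩ : ∃ B', B' = ∑ i, A i * (A i)ᵀ := ⟨_, rfl⟩
  obtain ⟨C, hC⟩ : ∃ C', C' = ∑ i, (A i)ᵀ * A i := ⟨_, rfl⟩
  obtain ⟨α, hα⟩ : ∃ a : ℝ, a = (1 + ε) * (s / m) := ⟨_, rfl⟩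
  obtain ⟨β, hβ⟩ : ∃ a : ℝ, a = (1 + ε) * (s / n) := ⟨_, rfl⟩
  obtain ⟨c, hc⟩ : ∃ a : ℝ, a = (1 + ε) * s / Real.sqrt (m * n) := ⟨_, rfl⟩
  rw [← hM, ← hc]
  rw [← hB, ← hα] at hleft2
  rw [← hC, ← hβ] at hright2
  -- B, C are PSD
  have hBpsd : ∀ x : Fin m → ℝ, 0 ≤ x ⬝ᵥ (B *ᵥ x) := by
    intro x
    rw [hB, sum_mulVec', dotProduct_sum']
    refine Finset.sum_nonneg fun l _ => ?_
    rw [← Matrix.mulVec_mulVec, Matrix.dotProduct_mulVec, ← Matrix.mulVec_transpose]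
    exact Finset.sum_nonneg fun i _ => mul_self_nonneg _
  have hCpsd : ∀ x : Fin n → ℝ, 0 ≤ x ⬝ᵥ (C *ᵥ x) := by
    intro x
    rw [hC, sum_mulVec', dotProduct_sum']
    refine Finset.sum_nonneg fun l _ => ?_
    rw [← Matrix.mulVec_mulVec, Matrix.dotProduct_mulVec, ← Matrix.mulVec_transpose]
    simp only [Matrix.transpose_transpose]
    exact Finset.sum_nonneg fun i _ => mul_self_nonneg _
  -- α, β nonneg
  have hα0 : 0 ≤ α := by
    have h1 := hBpsd (Pi.single ⟨0, hm⟩ 1)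
    have h2 := qf_le hleft2 (Pi.single ⟨0, hm⟩ 1)
    have h3 : (Pi.single (⟨0, hm⟩ : Fin m) (1:ℝ)) ⬝ᵥ (Pi.single ⟨0, hm⟩ 1) = 1 := by
      simp [dotProduct, Pi.single_apply]
    rw [h3, mul_one] at h2
    linarith
  have hβ0 : 0 ≤ β := by
    have h1 := hCpsd (Pi.single ⟨0, hn⟩ 1)
    have h2 := qf_le hright2 (Pi.single ⟨0, hn⟩ 1)
    have h3 : (Pi.single (⟨0, hn⟩ : Fin n) (1:ℝ)) ⬝ᵥ (Pi.single ⟨0, hn⟩ 1) = 1 := by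
      simp [dotProduct, Pi.single_apply]
    rw [h3, mul_one] at h2
    linarith
  have hes : 0 ≤ (1 + ε) * s := by
    have h4 : (1 + ε) * s = α * m := by rw [hα]; field_simp
    rw [h4]; positivity
  have hc0 : 0 ≤ c := by
    rw [hc]
    exact div_nonneg hes (Real.sqrt_nonneg _)
  have hc2 : c ^ 2 = α * β := by
    rw [hc, hα, hβ, div_pow, Real.sq_sqrt (by positivity : (0:ℝ) ≤ (m:ℝ) * n)]
    field_simp
  -- key quadratic bound
  have key : ∀ v : Fin n × Fin n → ℝ, (M *ᵥ v) ⬝ᵥ (M *ᵥ v) ≤ (α * β) * (v ⬝ᵥ v) := by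
    intro v
    obtain ⟨Y, hY⟩ : ∃ Y' : Matrix (Fin n) (Fin n) ℝ, Y' = Matrix.of fun p q => v (p,q) :=
      ⟨_, rfl⟩
    obtain ⟨Z, hZ⟩ : ∃ Z' : Matrix (Fin m) (Fin m) ℝ, Z' = ∑ l, A l * Y * (A l)ᵀ := ⟨_, rfl⟩
    obtain ⟨T, hT⟩ : ∃ t : ℝ, t = Matrix.trace (Zᵀ * Z) := ⟨_, rfl⟩
    have hMv : (M *ᵥ v) ⬝ᵥ (M *ᵥ v) = T := by
      rw [hT, trace_frob]
      simp only [dotProduct]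
      refine Finset.sum_congr rfl fun ij _ => ?_
      rw [hM, mulVec_kron A v ij, ← hY, ← hZ]
    have hV : v ⬝ᵥ v = Matrix.trace (Yᵀ * Y) := by
      rw [trace_frob, hY]
      simp only [dotProduct, Matrix.of_apply]
    -- cross term
    have hcross : T = ∑ x : Fin k × (Fin n × Fin m),
        ((A x.1)ᵀ * Z) x.2.1 x.2.2 * (Y * (A x.1)ᵀ) x.2.1 x.2.2 := by
      rw [Fintype.sum_prod_type]
      have key2 : ∀ l : Fin k, ∑ pj : Fin n × Fin m,
          ((A l)ᵀ * Z) pj.1 pj.2 * (Y * (A l)ᵀ) pj.1 pj.2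
          = Matrix.trace (((A l)ᵀ * Z)ᵀ * (Y * (A l)ᵀ)) := by
        intro l; rw [trace_frob]
      calc T = Matrix.trace (Zᵀ * Z) := hT
        _ = ∑ l, Matrix.trace (Zᵀ * (A l * Y * (A l)ᵀ)) := by
            nth_rewrite 2 [hZ]
            rw [Finset.mul_sum, Matrix.trace_sum]
        _ = ∑ l, Matrix.trace (((A l)ᵀ * Z)ᵀ * (Y * (A l)ᵀ)) := by
            refine Finset.sum_congr rfl fun l _ => ?_
            rw [Matrix.transpose_mul, Matrix.transpose_transpose]
            simp only [Matrix.mul_assoc]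
        _ = _ := Finset.sum_congr rfl fun l _ => (key2 l).symm
    -- Cauchy-Schwarz
    have hCS := Finset.sum_mul_sq_le_sq_mul_sq Finset.univ
      (fun x : Fin k × (Fin n × Fin m) => ((A x.1)ᵀ * Z) x.2.1 x.2.2)
      (fun x : Fin k × (Fin n × Fin m) => (Y * (A x.1)ᵀ) x.2.1 x.2.2)
    rw [← hcross] at hCS
    -- first factor
    have hS1eq : (∑ x : Fin k × (Fin n × Fin m), ((A x.1)ᵀ * Z) x.2.1 x.2.2 ^ 2)
        = Matrix.trace (Zᵀ * B * Z) := by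
      rw [hB, Finset.mul_sum, Finset.sum_mul, Matrix.trace_sum, Fintype.sum_prod_type]
      refine Finset.sum_congr rfl fun l _ => ?_
      have h2 : Zᵀ * (A l * (A l)ᵀ) * Z = ((A l)ᵀ * Z)ᵀ * ((A l)ᵀ * Z) := by
        rw [Matrix.transpose_mul, Matrix.transpose_transpose]
        simp only [Matrix.mul_assoc]
      rw [h2, trace_frob]
      exact Finset.sum_congr rfl fun pj _ => by ring
    -- second factor
    have hS2eq : (∑ x : Fin k × (Fin n × Fin m), (Y * (A x.1)ᵀ) x.2.1 x.2.2 ^ 2)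
        = Matrix.trace (Y * C * Yᵀ) := by
      rw [hC, Finset.mul_sum, Finset.sum_mul, Matrix.trace_sum, Fintype.sum_prod_type]
      refine Finset.sum_congr rfl fun l _ => ?_
      have h2 : Y * ((A l)ᵀ * A l) * Yᵀ = (Y * (A l)ᵀ) * (Y * (A l)ᵀ)ᵀ := by
        rw [Matrix.transpose_mul, Matrix.transpose_transpose]
        simp only [Matrix.mul_assoc]
      rw [h2, ← Matrix.trace_mul_comm, trace_frob]
      exact Finset.sum_congr rfl fun pj _ => by ring
    -- bounds on factors
    have hTcols : T = ∑ j, (fun i => Z i j) ⬝ᵥ (fun i => Z i j) := by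
      have h5 := trace_XBX (1 : Matrix (Fin m) (Fin m) ℝ) Z
      rw [Matrix.mul_one] at h5
      simp only [Matrix.one_mulVec] at h5
      rw [hT, h5]
    have hS1le : Matrix.trace (Zᵀ * B * Z) ≤ α * T := by
      rw [trace_XBX, hTcols, Finset.mul_sum]
      exact Finset.sum_le_sum fun j _ => qf_le hleft2 _
    have hVrows : v ⬝ᵥ v = ∑ j, (fun i => Yᵀ i j) ⬝ᵥ (fun i => Yᵀ i j) := by
      have h5 := trace_XBX (1 : Matrix (Fin n) (Fin n) ℝ) Yᵀ
      rw [Matrix.mul_one] at h5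
      simp only [Matrix.one_mulVec, Matrix.transpose_transpose] at h5
      rw [hV, Matrix.trace_mul_comm, h5]
    have hS2le : Matrix.trace (Y * C * Yᵀ) ≤ β * (v ⬝ᵥ v) := by
      have h6 : Y * C * Yᵀ = (Yᵀ)ᵀ * C * Yᵀ := by rw [Matrix.transpose_transpose]
      rw [h6, trace_XBX, hVrows, Finset.mul_sum]
      exact Finset.sum_le_sum fun j _ => qf_le hright2 _
    -- nonnegativity
    have hT0 : 0 ≤ T := by
      rw [← hMv]
      exact Finset.sum_nonneg fun i _ => mul_self_nonneg _
    have hV0 : 0 ≤ v ⬝ᵥ v := Finset.sum_nonneg fun i _ => mul_self_nonneg _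
    have hS2nn : 0 ≤ ∑ x : Fin k × (Fin n × Fin m), (Y * (A x.1)ᵀ) x.2.1 x.2.2 ^ 2 :=
      Finset.sum_nonneg fun x _ => sq_nonneg _
    have h7 : T ^ 2 ≤ (α * T) * (β * (v ⬝ᵥ v)) := by
      refine hCS.trans (mul_le_mul ?_ ?_ hS2nn (by positivity))
      · rw [hS1eq]; exact hS1le
      · rw [hS2eq]; exact hS2le
    have h8 : T ≤ (α * β) * (v ⬝ᵥ v) := by
      rcases eq_or_lt_of_le hT0 with h0 | hpos
      · rw [← h0]; positivity
      · nlinarith [h7, hpos]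
    rw [hMv]
    exact h8
  -- PSD of c² I - MᵀM
  have hMM : ∀ x : Fin n × Fin n → ℝ, x ⬝ᵥ ((Mᵀ * M) *ᵥ x) = (M *ᵥ x) ⬝ᵥ (M *ᵥ x) := by
    intro x
    rw [← Matrix.mulVec_mulVec, Matrix.dotProduct_mulVec, Matrix.vecMul_transpose]
  have hpsd : ((c ^ 2 • 1 : Matrix (Fin n × Fin n) (Fin n × Fin n) ℝ) - Mᵀ * M).PosSemidef := by
    refine Matrix.PosSemidef.of_dotProduct_mulVec_nonneg ?_ ?_
    · refine Matrix.IsHermitian.sub ?_ (show (Mᵀ * M).IsHermitian by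
        simpa using Matrix.isHermitian_conjTranspose_mul_self M)
      simp [Matrix.IsHermitian, Matrix.conjTranspose_smul]
    · intro x
      simp only [star_trivial, Matrix.sub_mulVec, Matrix.smul_mulVec, Matrix.one_mulVec,
        dotProduct_sub, dotProduct_smul, smul_eq_mul]
      rw [hMM x]
      have h9 := key x
      rw [hc2]
      linarith
  -- eigenvalue bound
  have hsq : ∀ i, Real.sqrt ((show (Mᵀ * M).IsHermitian by
        simpa using Matrix.isHermitian_conjTranspose_mul_self M).eigenvalues i) ≤ c := by
    intro i
    have h10 := eig_le (show (Mᵀ * M).IsHermitian by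
        simpa using Matrix.isHermitian_conjTranspose_mul_self M) hpsd i
    calc Real.sqrt ((show (Mᵀ * M).IsHermitian by
        simpa using Matrix.isHermitian_conjTranspose_mul_self M).eigenvalues i)
        ≤ Real.sqrt (c ^ 2) := Real.sqrt_le_sqrt h10
      _ = c := by rw [Real.sqrt_sq hc0]
  have hmem : ∀ x ∈ svList M, x ≤ c := by
    intro x hx
    unfold svList at hx
    rw [List.mem_insertionSort, Multiset.mem_toList, Multiset.mem_map] at hx
    obtain ⟨i, _, rfl⟩ := hx
    exact hsq i
  show (svList M).getD (1 - 1) 0 ≤ c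
  rw [List.getD_eq_getElem?_getD]
  rcases h11 : (svList M)[1-1]? with _ | x
  · simpa using hc0
  · simpa using hmem x (List.mem_of_getElem? h11)
end

section
/- Let B ∈ ℝ^{m×n} be a non-negative ε-nearly doubly balanced matrix with ε ≤ 1/2, and let G_B be its weighted bipartite graph with conductance φ(G_B). Then the second largest singular value of B satisfies σ₂(B) ≤ (1 − φ(G_B)²/2 + 3ε)·s(B)/√(mn). -/
open Matrix Finset
open scoped RealInnerProductSpace
set_option linter.unusedSectionVars false
set_option maxHeartbeats 1000000

lemma Matrix.isHermitian_transpose_mul_self {m n : Type*} [Fintype m] (A : Matrix m n ℝ) :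
    (Aᵀ * A).IsHermitian := by
  simpa using Matrix.isHermitian_conjTranspose_mul_self A

/-- The edge weights of the weighted bipartite graph `G_B` associated to a matrix `B`:
one vertex per row and per column, the edge between row `i` and column `j` has
weight `B i j`. -/
def bipWeight {m n : ℕ} (B : Matrix (Fin m) (Fin n) ℝ) :
    (Fin m ⊕ Fin n) → (Fin m ⊕ Fin n) → ℝ
  | Sum.inl i, Sum.inr j => B i j
  | Sum.inr j, Sum.inl i => B i j
  | _, _ => 0

/-- The volume of a vertex set in the weighted graph. -/
def bipVol {m n : ℕ} (B : Matrix (Fin m) (Fin n) ℝ) (S : Finset (Fin m ⊕ Fin n)) : ℝ :=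
  ∑ v ∈ S, ∑ u : Fin m ⊕ Fin n, bipWeight B v u

/-- The total weight of edges crossing from `S` to its complement. -/
def bipCut {m n : ℕ} (B : Matrix (Fin m) (Fin n) ℝ) (S : Finset (Fin m ⊕ Fin n)) : ℝ :=
  ∑ v ∈ S, ∑ u ∈ Sᶜ, bipWeight B v u

/-- The conductance `φ(G_B)` of the weighted bipartite graph of `B`. -/
noncomputable def bipConductance {m n : ℕ} (B : Matrix (Fin m) (Fin n) ℝ) : ℝ :=
  sInf {x : ℝ | ∃ S : Finset (Fin m ⊕ Fin n), S.Nonempty ∧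
    bipVol B S ≤ bipVol B Finset.univ / 2 ∧ x = bipCut B S / bipVol B S}

section PartA
variable {κ : Type*} [Fintype κ] [DecidableEq κ] (g : κ → ℝ)

noncomputable def srt (g : κ → ℝ) : List ℝ :=
  ((Finset.univ.val.map g).toList).insertionSort (· ≥ ·)

lemma srt_sorted : (srt g).Pairwise (· ≥ ·) := List.pairwise_insertionSort _ _

lemma srt_coe : (srt g : Multiset ℝ) = Multiset.map g Finset.univ.val := by
  unfold srt
  have h := List.perm_insertionSort (α := ℝ) (· ≥ ·) ((Finset.univ.val.map g).toList)
  have h2 := Multiset.coe_eq_coe.mpr h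
  rw [h2, Multiset.coe_toList]

lemma srt_length : (srt g).length = Fintype.card κ := by
  have : (srt g : Multiset ℝ).card = (Multiset.map g Finset.univ.val).card := by
    rw [srt_coe]
  simpa using this

lemma srt_mem {x : ℝ} (hx : x ∈ srt g) : ∃ i, g i = x := by
  have h : x ∈ (srt g : Multiset ℝ) := hx
  rw [srt_coe] at h
  obtain ⟨i, _, hi⟩ := Multiset.mem_map.1 h
  exact ⟨i, hi⟩

lemma srt_getD_nonneg (hg : ∀ i, 0 ≤ g i) (k : ℕ) : 0 ≤ (srt g).getD k 0 := by
  by_cases h : k < (srt g).length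
  · rw [List.getD_eq_getElem _ _ h]
    obtain ⟨i, hi⟩ := srt_mem g (List.getElem_mem h)
    rw [← hi]; exact hg i
  · rw [List.getD_eq_default _ _ (not_lt.1 h)]

lemma srt_getD_le (t : ℝ) (ht : 0 ≤ t) (hg : ∀ i, g i ≤ t) (k : ℕ) :
    (srt g).getD k 0 ≤ t := by
  by_cases h : k < (srt g).length
  · rw [List.getD_eq_getElem _ _ h]
    obtain ⟨i, hi⟩ := srt_mem g (List.getElem_mem h)
    rw [← hi]; exact hg i
  · rw [List.getD_eq_default _ _ (not_lt.1 h)]; exact ht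

lemma univ_val_eq_cons (i : κ) :
    (Finset.univ.val : Multiset κ) = i ::ₘ Finset.univ.val.erase i :=
  (Multiset.cons_erase (by simp)).symm

/-- two distinct indices whose values are ≥ the second sorted value. -/
lemma srt_exists_two (hcard : 2 ≤ Fintype.card κ) :
    ∃ i₁ i₂ : κ, i₁ ≠ i₂ ∧ (srt g).getD 1 0 ≤ g i₁ ∧ (srt g).getD 1 0 ≤ g i₂ := by
  have hlen : 2 ≤ (srt g).length := by rw [srt_length]; exact hcard
  obtain ⟨a, l1, hl1⟩ := List.exists_cons_of_ne_nil
    (l := srt g) (by intro h; rw [h] at hlen; simp at hlen)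
  obtain ⟨b, l2, hl2⟩ := List.exists_cons_of_ne_nil
    (l := l1) (by intro h; rw [hl1, h] at hlen; simp at hlen)
  have hlist : srt g = a :: b :: l2 := by rw [hl1, hl2]
  have hsorted := srt_sorted g
  rw [hlist] at hsorted
  have hab : a ≥ b := (List.pairwise_cons.1 hsorted).1 b (by simp)
  have hgetD : (srt g).getD 1 0 = b := by rw [hlist]; rfl
  have hM : (a ::ₘ b ::ₘ (l2 : Multiset ℝ)) = Multiset.map g Finset.univ.val := by
    rw [← srt_coe g, hlist]; rfl
  have ha : a ∈ Multiset.map g Finset.univ.val := by rw [← hM]; simp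
  obtain ⟨i₁, _, hi₁⟩ := Multiset.mem_map.1 ha
  have hsplit : Multiset.map g Finset.univ.val
      = a ::ₘ Multiset.map g (Finset.univ.val.erase i₁) := by
    conv_lhs => rw [univ_val_eq_cons i₁]
    rw [Multiset.map_cons, hi₁]
  have hbl : b ::ₘ (l2 : Multiset ℝ) = Multiset.map g (Finset.univ.val.erase i₁) := by
    have := hM.trans hsplit
    exact (Multiset.cons_inj_right a).1 this
  have hb : b ∈ Multiset.map g (Finset.univ.val.erase i₁) := by rw [← hbl]; simp
  obtain ⟨i₂, hi₂mem, hi₂⟩ := Multiset.mem_map.1 hb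
  have hne : i₂ ≠ i₁ :=
    ((Multiset.Nodup.mem_erase_iff Finset.univ.nodup).1 hi₂mem).1
  exact ⟨i₁, i₂, hne.symm, by rw [hgetD, hi₁]; exact hab, by rw [hgetD, hi₂]⟩

/-- a top index such that all other values are ≤ the second sorted value. -/
lemma srt_exists_top (hcard : 1 ≤ Fintype.card κ) :
    ∃ i₀ : κ, ∀ i, i ≠ i₀ → g i ≤ (srt g).getD 1 0 := by
  have hlen : 1 ≤ (srt g).length := by rw [srt_length]; exact hcard
  obtain ⟨a, l1, hl1⟩ := List.exists_cons_of_ne_nil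
    (l := srt g) (by intro h; rw [h] at hlen; simp at hlen)
  have hM : (a ::ₘ (l1 : Multiset ℝ)) = Multiset.map g Finset.univ.val := by
    rw [← srt_coe g, hl1]; rfl
  have ha : a ∈ Multiset.map g Finset.univ.val := by rw [← hM]; simp
  obtain ⟨i₀, _, hi₀⟩ := Multiset.mem_map.1 ha
  refine ⟨i₀, fun i hi => ?_⟩
  have hsplit : Multiset.map g Finset.univ.val
      = a ::ₘ Multiset.map g (Finset.univ.val.erase i₀) := by
    conv_lhs => rw [univ_val_eq_cons i₀]
    rw [Multiset.map_cons, hi₀]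
  have hl1m : (l1 : Multiset ℝ) = Multiset.map g (Finset.univ.val.erase i₀) :=
    (Multiset.cons_inj_right a).1 (hM.trans hsplit)
  have himem : i ∈ Finset.univ.val.erase i₀ :=
    (Multiset.Nodup.mem_erase_iff Finset.univ.nodup).2 ⟨hi, by simp⟩
  have hgi : g i ∈ (l1 : Multiset ℝ) := by
    rw [hl1m]; exact Multiset.mem_map_of_mem g himem
  have hgil : g i ∈ l1 := hgi
  -- now use sortedness
  rcases l1 with _ | ⟨b, l2⟩
  · simp at hgil
  · have hgetD : (srt g).getD 1 0 = b := by rw [hl1]; rfl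
    rw [hgetD]
    have hsorted := srt_sorted g
    rw [hl1] at hsorted
    have hs2 : (b :: l2).Pairwise (· ≥ ·) := (List.pairwise_cons.1 hsorted).2
    rcases List.mem_cons.1 hgil with h | h
    · rw [h]
    · exact (List.pairwise_cons.1 hs2).1 _ h

end PartA

lemma herm_transpose {n : ℕ} {M : Matrix (Fin n) (Fin n) ℝ} (hM : M.IsHermitian) : Mᵀ = M := by
  rw [← Matrix.conjTranspose_eq_transpose_of_trivial]; exact hM.eq

lemma dot_mulVec_symm {n : ℕ} {M : Matrix (Fin n) (Fin n) ℝ} (hM : M.IsHermitian)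
    (a b : Fin n → ℝ) : a ⬝ᵥ (M *ᵥ b) = (M *ᵥ a) ⬝ᵥ b := by
  rw [Matrix.dotProduct_mulVec, ← Matrix.mulVec_transpose, herm_transpose hM]

lemma dot_CC {m n : ℕ} (C : Matrix (Fin m) (Fin n) ℝ) (x y : Fin n → ℝ) :
    ∑ i, (C *ᵥ x) i * (C *ᵥ y) i = x ⬝ᵥ ((Cᵀ * C) *ᵥ y) := by
  rw [← dotProduct, ← Matrix.mulVec_mulVec, Matrix.dotProduct_mulVec (v := x),
    Matrix.vecMul_transpose]

lemma inner_euclid {n : ℕ} (x y : EuclideanSpace ℝ (Fin n)) :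
    ⟪x, y⟫ = ∑ i, x i * y i := by
  simp [PiLp.inner_apply, RCLike.inner_apply, mul_comm]

/-- eigenvector as a plain function -/
noncomputable def ev {n : ℕ} {M : Matrix (Fin n) (Fin n) ℝ} (hM : M.IsHermitian) (k : Fin n) :
    Fin n → ℝ := ⇑(hM.eigenvectorBasis k)

lemma ev_mulVec {n : ℕ} {M : Matrix (Fin n) (Fin n) ℝ} (hM : M.IsHermitian) (l : Fin n) :
    M *ᵥ ev hM l = fun i => hM.eigenvalues l * ev hM l i := by
  have h := hM.mulVec_eigenvectorBasis l
  exact h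

lemma eigen_orth {n : ℕ} {M : Matrix (Fin n) (Fin n) ℝ} (hM : M.IsHermitian) (k l : Fin n) :
    ∑ x, ev hM k x * ev hM l x = if k = l then 1 else 0 := by
  have : ⟪hM.eigenvectorBasis k, hM.eigenvectorBasis l⟫ = ∑ x, ev hM k x * ev hM l x := by
    rw [inner_euclid]; rfl
  rw [← this]
  by_cases h : k = l
  · rw [if_pos h, h, real_inner_self_eq_norm_sq, hM.eigenvectorBasis.orthonormal.1 l, one_pow]
  · rw [if_neg h]; exact hM.eigenvectorBasis.orthonormal.2 h

lemma eigen_dot_M {n : ℕ} {M : Matrix (Fin n) (Fin n) ℝ} (hM : M.IsHermitian) (k l : Fin n) :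
    ev hM k ⬝ᵥ (M *ᵥ ev hM l) = hM.eigenvalues l * (if k = l then 1 else 0) := by
  rw [ev_mulVec hM l]
  have : ev hM k ⬝ᵥ (fun i => hM.eigenvalues l * ev hM l i)
      = hM.eigenvalues l * ∑ x, ev hM k x * ev hM l x := by
    unfold dotProduct
    rw [Finset.mul_sum]
    exact Finset.sum_congr rfl fun j _ => by ring
  rw [this, eigen_orth hM k l]

lemma gram_dot {m n : ℕ} (C : Matrix (Fin m) (Fin n) ℝ) (k l : Fin n) :
    ∑ i, (C *ᵥ ev (Matrix.isHermitian_transpose_mul_self C) k) i *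
         (C *ᵥ ev (Matrix.isHermitian_transpose_mul_self C) l) i
      = (Matrix.isHermitian_transpose_mul_self C).eigenvalues l * (if k = l then 1 else 0) := by
  rw [dot_CC]
  exact eigen_dot_M (Matrix.isHermitian_transpose_mul_self C) k l

lemma quad_expand {n : ℕ} {M : Matrix (Fin n) (Fin n) ℝ} (hM : M.IsHermitian) (x : Fin n → ℝ) :
    x ⬝ᵥ (M *ᵥ x) = ∑ k, hM.eigenvalues k * (∑ j, ev hM k j * x j) ^ 2 := by
  set X : EuclideanSpace ℝ (Fin n) := (WithLp.equiv 2 (Fin n → ℝ)).symm x with hX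
  set Y : EuclideanSpace ℝ (Fin n) := (WithLp.equiv 2 (Fin n → ℝ)).symm (M *ᵥ x) with hY
  have key := hM.eigenvectorBasis.sum_inner_mul_inner X Y
  have h1 : ⟪X, Y⟫ = x ⬝ᵥ (M *ᵥ x) := by rw [inner_euclid]; rfl
  rw [h1] at key
  rw [← key]
  apply Finset.sum_congr rfl
  intro k _
  have h2 : ⟪X, hM.eigenvectorBasis k⟫ = ∑ j, ev hM k j * x j := by
    rw [inner_euclid]; exact Finset.sum_congr rfl fun j _ => mul_comm _ _
  have h3 : ⟪hM.eigenvectorBasis k, Y⟫ = hM.eigenvalues k * ∑ j, ev hM k j * x j := by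
    rw [inner_euclid]
    have h4 : ∑ j, (hM.eigenvectorBasis k) j * Y j = ev hM k ⬝ᵥ (M *ᵥ x) := rfl
    rw [h4, dot_mulVec_symm hM, ev_mulVec hM k]
    have : (fun i => hM.eigenvalues k * ev hM k i) ⬝ᵥ x
        = hM.eigenvalues k * ∑ j, ev hM k j * x j := by
      unfold dotProduct
      rw [Finset.mul_sum]
      exact Finset.sum_congr rfl fun j _ => by ring
    rw [this]
  rw [h2, h3]; ring

lemma parseval_sq {n : ℕ} {M : Matrix (Fin n) (Fin n) ℝ} (hM : M.IsHermitian) (x : Fin n → ℝ) :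
    ∑ j, x j ^ 2 = ∑ k, (∑ j, ev hM k j * x j) ^ 2 := by
  set X : EuclideanSpace ℝ (Fin n) := (WithLp.equiv 2 (Fin n → ℝ)).symm x with hX
  have key := hM.eigenvectorBasis.sum_inner_mul_inner X X
  have h1 : ⟪X, X⟫ = ∑ j, x j ^ 2 := by
    rw [inner_euclid]; exact Finset.sum_congr rfl fun j _ => (sq (x j)).symm
  rw [h1] at key
  rw [← key]
  apply Finset.sum_congr rfl
  intro k _
  have h2 : ⟪X, hM.eigenvectorBasis k⟫ = ∑ j, ev hM k j * x j := by
    rw [inner_euclid]; exact Finset.sum_congr rfl fun j _ => mul_comm _ _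
  have h3 : ⟪hM.eigenvectorBasis k, X⟫ = ∑ j, ev hM k j * x j := by
    rw [inner_euclid]; rfl
  rw [h2, h3, sq]

noncomputable def predT (T : Finset ℝ) (t : ℝ) : ℝ :=
  if h : (T.filter (· < t)).Nonempty then (T.filter (· < t)).max' h else 0

lemma predT_lt {T : Finset ℝ} {t : ℝ} (ht : 0 < t) : predT T t < t := by
  unfold predT
  split_ifs with h
  · have := Finset.max'_mem _ h
    exact (Finset.mem_filter.1 this).2
  · exact ht

lemma predT_mem_or_zero (T : Finset ℝ) (t : ℝ) : predT T t = 0 ∨ predT T t ∈ T := by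
  unfold predT
  split_ifs with h
  · exact Or.inr (Finset.mem_filter.1 (Finset.max'_mem _ h)).1
  · exact Or.inl rfl

lemma le_predT {T : Finset ℝ} {t t' : ℝ} (h1 : t' ∈ T) (h2 : t' < t) : t' ≤ predT T t := by
  unfold predT
  have hmem : t' ∈ T.filter (· < t) := Finset.mem_filter.2 ⟨h1, h2⟩
  rw [dif_pos ⟨t', hmem⟩]
  exact Finset.le_max' _ _ hmem

lemma telescope_aux (T : Finset ℝ) (hT : ∀ t ∈ T, 0 < t) :
    ∀ N a, (T.filter (· ≤ a)).card ≤ N → (a = 0 ∨ a ∈ T) →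
      ∑ t ∈ T.filter (· ≤ a), (t - predT T t) = a := by
  intro N
  induction N with
  | zero =>
    intro a hcard ha
    rcases ha with ha | ha
    · subst ha
      have : T.filter (· ≤ (0:ℝ)) = ∅ := by
        apply Finset.filter_eq_empty_iff.2
        intro t ht hle
        exact absurd hle (not_le.2 (hT t ht))
      rw [this]; simp
    · have hpos : 0 < (T.filter (· ≤ a)).card :=
        Finset.card_pos.2 ⟨a, Finset.mem_filter.2 ⟨ha, le_refl a⟩⟩
      omega
  | succ N ih =>
    intro a hcard ha
    rcases ha with ha | ha
    · subst ha
      have : T.filter (· ≤ (0:ℝ)) = ∅ := by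
        apply Finset.filter_eq_empty_iff.2
        intro t ht hle
        exact absurd hle (not_le.2 (hT t ht))
      rw [this]; simp
    · have ha0 : 0 < a := hT a ha
      have hpa : predT T a < a := predT_lt ha0
      have hsplit : T.filter (· ≤ a) = insert a (T.filter (· ≤ predT T a)) := by
        ext t
        simp only [Finset.mem_filter, Finset.mem_insert]
        constructor
        · rintro ⟨htT, hta⟩
          rcases eq_or_lt_of_le hta with h | h
          · exact Or.inl h
          · exact Or.inr ⟨htT, le_predT htT h⟩
        · rintro (h | ⟨htT, htp⟩)
          · exact ⟨h ▸ ha, h ▸ le_refl a⟩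
          · exact ⟨htT, htp.trans hpa.le⟩
      have hnotmem : a ∉ T.filter (· ≤ predT T a) := by
        intro hmem
        exact absurd ((Finset.mem_filter.1 hmem).2.trans_lt hpa) (lt_irrefl a)
      have hcard' : (T.filter (· ≤ predT T a)).card ≤ N := by
        have := Finset.card_insert_of_notMem hnotmem
        rw [← hsplit] at this
        omega
      rw [hsplit, Finset.sum_insert hnotmem,
        ih (predT T a) hcard' (predT_mem_or_zero T a)]
      ring

lemma telescope (T : Finset ℝ) (hT : ∀ t ∈ T, 0 < t) (a : ℝ) (ha : a = 0 ∨ a ∈ T) :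
    ∑ t ∈ T, (t - predT T t) * (if t ≤ a then 1 else 0) = a := by
  have h1 : ∑ t ∈ T, (if t ≤ a then (t - predT T t) * 1 else (t - predT T t) * 0)
      = ∑ t ∈ T.filter (· ≤ a), (t - predT T t) * 1 + ∑ t ∈ T.filter (¬ · ≤ a), (t - predT T t) * 0 := by
    rw [← Finset.sum_filter_add_sum_filter_not T (· ≤ a)]
    congr 1
    · exact Finset.sum_congr rfl fun t ht => if_pos (Finset.mem_filter.1 ht).2
    · exact Finset.sum_congr rfl fun t ht => if_neg (Finset.mem_filter.1 ht).2
  have h2 : ∑ t ∈ T, (t - predT T t) * (if t ≤ a then 1 else 0)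
      = ∑ t ∈ T, (if t ≤ a then (t - predT T t) * 1 else (t - predT T t) * 0) := by
    exact Finset.sum_congr rfl fun t _ => by split_ifs <;> ring
  rw [h2, h1]
  simp only [mul_one, mul_zero, Finset.sum_const_zero, add_zero]
  exact telescope_aux T hT _ a le_rfl ha
section Graph
variable {m n : ℕ} (B : Matrix (Fin m) (Fin n) ℝ)

/-- degree of a vertex -/
def bipDeg (x : Fin m ⊕ Fin n) : ℝ := ∑ u, bipWeight B x u

lemma bipDeg_inl (i : Fin m) : bipDeg B (Sum.inl i) = ∑ j, B i j := by
  unfold bipDeg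
  rw [Fintype.sum_sum_type]
  have h1 : ∑ i' : Fin m, bipWeight B (Sum.inl i) (Sum.inl i') = 0 :=
    Finset.sum_eq_zero fun _ _ => rfl
  rw [h1, zero_add]
  exact Finset.sum_congr rfl fun j _ => rfl

lemma bipDeg_inr (j : Fin n) : bipDeg B (Sum.inr j) = ∑ i, B i j := by
  unfold bipDeg
  rw [Fintype.sum_sum_type]
  have h1 : ∑ j' : Fin n, bipWeight B (Sum.inr j) (Sum.inr j') = 0 :=
    Finset.sum_eq_zero fun _ _ => rfl
  rw [h1, add_zero]
  exact Finset.sum_congr rfl fun i _ => rfl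

lemma bipVol_eq_sum (S : Finset (Fin m ⊕ Fin n)) : bipVol B S = ∑ x ∈ S, bipDeg B x := rfl

lemma bipWeight_nonneg (hB : ∀ i j, 0 ≤ B i j) (x y : Fin m ⊕ Fin n) : 0 ≤ bipWeight B x y := by
  rcases x with i | j <;> rcases y with i' | j'
  · exact le_refl 0
  · exact hB i j'
  · exact hB i' j
  · exact le_refl 0

lemma bipVol_nonneg (hB : ∀ i j, 0 ≤ B i j) (S : Finset (Fin m ⊕ Fin n)) : 0 ≤ bipVol B S :=
  Finset.sum_nonneg fun v _ => Finset.sum_nonneg fun u _ => bipWeight_nonneg B hB v u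

lemma bipCut_nonneg (hB : ∀ i j, 0 ≤ B i j) (S : Finset (Fin m ⊕ Fin n)) : 0 ≤ bipCut B S :=
  Finset.sum_nonneg fun v _ => Finset.sum_nonneg fun u _ => bipWeight_nonneg B hB v u

lemma bipVol_univ (s : ℝ) (hs : s = ∑ i, ∑ j, B i j) : bipVol B Finset.univ = 2 * s := by
  rw [bipVol_eq_sum]
  rw [Fintype.sum_sum_type]
  have h1 : ∑ i, bipDeg B (Sum.inl i) = s := by
    rw [hs]; exact Finset.sum_congr rfl fun i _ => bipDeg_inl B i
  have h2 : ∑ j, bipDeg B (Sum.inr j) = s := by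
    rw [hs, show (∑ i, ∑ j, B i j) = ∑ j, ∑ i, B i j from Finset.sum_comm]
    exact Finset.sum_congr rfl fun j _ => bipDeg_inr B j
  rw [h1, h2]; ring

lemma sum_mem_eq_sum_ite {α : Type*} [Fintype α] [DecidableEq α] (S : Finset α) (f : α → ℝ) :
    ∑ x ∈ S, f x = ∑ x, if x ∈ S then f x else 0 := by
  rw [Finset.sum_ite_mem, Finset.univ_inter]

lemma bipCut_eq (S : Finset (Fin m ⊕ Fin n)) :
    bipCut B S = ∑ i, ∑ j, B i j *
      ((if Sum.inl i ∈ S ∧ Sum.inr j ∉ S then 1 else 0) +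
       (if Sum.inr j ∈ S ∧ Sum.inl i ∉ S then 1 else 0)) := by
  have key : bipCut B S = ∑ v, ∑ u,
      (if v ∈ S ∧ u ∉ S then bipWeight B v u else 0) := by
    unfold bipCut
    rw [sum_mem_eq_sum_ite]
    apply Finset.sum_congr rfl
    intro v _
    by_cases hv : v ∈ S
    · rw [if_pos hv, sum_mem_eq_sum_ite]
      apply Finset.sum_congr rfl
      intro u _
      simp only [Finset.mem_compl]
      by_cases hu : u ∉ S
      · rw [if_pos hu, if_pos ⟨hv, hu⟩]
      · rw [if_neg hu, if_neg (fun h => hu h.2)]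
    · rw [if_neg hv]
      symm
      exact Finset.sum_eq_zero fun u _ => if_neg (fun h => hv h.1)
  rw [key, Fintype.sum_sum_type]
  have hll : ∑ i, ∑ u, (if Sum.inl i ∈ S ∧ u ∉ S then bipWeight B (Sum.inl i) u else 0)
      = ∑ i, ∑ j, (if Sum.inl i ∈ S ∧ Sum.inr j ∉ S then B i j else 0) := by
    apply Finset.sum_congr rfl
    intro i _
    rw [Fintype.sum_sum_type]
    have h0 : ∑ i', (if Sum.inl i ∈ S ∧ Sum.inl i' ∉ S then bipWeight B (Sum.inl i) (Sum.inl i') else 0) = 0 := by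
      apply Finset.sum_eq_zero
      intro i' _
      split_ifs <;> rfl
    rw [h0, zero_add]
    exact Finset.sum_congr rfl fun j _ => by split_ifs <;> rfl
  have hrr : ∑ j, ∑ u, (if Sum.inr j ∈ S ∧ u ∉ S then bipWeight B (Sum.inr j) u else 0)
      = ∑ j, ∑ i, (if Sum.inr j ∈ S ∧ Sum.inl i ∉ S then B i j else 0) := by
    apply Finset.sum_congr rfl
    intro j _
    rw [Fintype.sum_sum_type]
    have h0 : ∑ j', (if Sum.inr j ∈ S ∧ Sum.inr j' ∉ S then bipWeight B (Sum.inr j) (Sum.inr j') else 0) = 0 := by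
      apply Finset.sum_eq_zero
      intro j' _
      split_ifs <;> rfl
    rw [h0, add_zero]
    exact Finset.sum_congr rfl fun i _ => by split_ifs <;> rfl
  rw [hll, hrr]
  rw [Finset.sum_comm (s := Finset.univ) (t := Finset.univ)
    (f := fun j i => (if Sum.inr j ∈ S ∧ Sum.inl i ∉ S then B i j else 0))]
  rw [← Finset.sum_add_distrib]
  apply Finset.sum_congr rfl
  intro i _
  rw [← Finset.sum_add_distrib]
  apply Finset.sum_congr rfl
  intro j _
  split_ifs <;> ring

/-- the set defining conductance -/
def condSet : Set ℝ := {x : ℝ | ∃ S : Finset (Fin m ⊕ Fin n), S.Nonempty ∧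
    bipVol B S ≤ bipVol B Finset.univ / 2 ∧ x = bipCut B S / bipVol B S}

lemma bipConductance_eq : bipConductance B = sInf (condSet B) := rfl

lemma condSet_nonneg (hB : ∀ i j, 0 ≤ B i j) : ∀ x ∈ condSet B, (0:ℝ) ≤ x := by
  rintro x ⟨S, _, _, rfl⟩
  exact div_nonneg (bipCut_nonneg B hB S) (bipVol_nonneg B hB S)

lemma bipConductance_nonneg (hB : ∀ i j, 0 ≤ B i j) : 0 ≤ bipConductance B :=
  Real.sInf_nonneg (condSet_nonneg B hB)

lemma bipConductance_le (hB : ∀ i j, 0 ≤ B i j) {x : ℝ} (hx : x ∈ condSet B) :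
    bipConductance B ≤ x :=
  csInf_le ⟨0, fun y hy => condSet_nonneg B hB y hy⟩ hx

/-- the all-rows set witnesses conductance ≤ 1 (when s > 0). -/
lemma rows_mem_condSet (hm : 0 < m) (s : ℝ) (hs : s = ∑ i, ∑ j, B i j) (hspos : 0 < s) :
    (1:ℝ) ∈ condSet B := by
  classical
  set S : Finset (Fin m ⊕ Fin n) := Finset.univ.filter (fun x => x.isLeft) with hS
  have hmem : ∀ i : Fin m, Sum.inl i ∈ S := by
    intro i; simp [hS]
  have hne : S.Nonempty := ⟨Sum.inl ⟨0, hm⟩, hmem _⟩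
  have hvol : bipVol B S = s := by
    rw [bipVol_eq_sum, hS]
    rw [Finset.sum_filter]
    rw [Fintype.sum_sum_type]
    have h2 : ∑ j : Fin n, (if (Sum.inr j : Fin m ⊕ Fin n).isLeft then bipDeg B (Sum.inr j) else 0) = 0 := by
      apply Finset.sum_eq_zero; intro j _; rfl
    have h1 : ∑ i : Fin m, (if (Sum.inl i : Fin m ⊕ Fin n).isLeft then bipDeg B (Sum.inl i) else 0) = s := by
      rw [hs]
      apply Finset.sum_congr rfl
      intro i _
      have hc : (Sum.inl i : Fin m ⊕ Fin n).isLeft = true := rfl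
      rw [if_pos hc]
      exact bipDeg_inl B i
    rw [h1, h2, add_zero]
  have hcut : bipCut B S = s := by
    rw [bipCut_eq, hs]
    apply Finset.sum_congr rfl; intro i _
    apply Finset.sum_congr rfl; intro j _
    have hjl : (Sum.inr j : Fin m ⊕ Fin n) ∉ S := by simp [hS]
    rw [if_pos ⟨hmem i, hjl⟩, if_neg (fun h => hjl h.1)]
    ring
  refine ⟨S, hne, ?_, ?_⟩
  · rw [hvol, bipVol_univ B s hs]; linarith
  · rw [hvol, hcut, div_self (ne_of_gt hspos)]

lemma bipConductance_le_one (hB : ∀ i j, 0 ≤ B i j) (hm : 0 < m)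
    (s : ℝ) (hs : s = ∑ i, ∑ j, B i j) (hspos : 0 < s) : bipConductance B ≤ 1 :=
  bipConductance_le B hB (rows_mem_condSet B hm s hs hspos)

end Graph
section Median

lemma exists_median {V : Type*} [Fintype V] [Nonempty V] [DecidableEq V]
    (d g : V → ℝ) (hd : ∀ x, 0 ≤ d x) :
    ∃ c : ℝ, (∑ x ∈ Finset.univ.filter (fun x => c < g x), d x) ≤ (∑ x, d x)/2 ∧
             (∑ x ∈ Finset.univ.filter (fun x => g x < c), d x) ≤ (∑ x, d x)/2 := by
  classical
  set T : ℝ := ∑ x, d x with hT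
  have hT0 : 0 ≤ T := Finset.sum_nonneg fun x _ => hd x
  have himg : (Finset.univ.image g).Nonempty := ⟨g (Classical.arbitrary V), by simp⟩
  set F : Finset ℝ := (Finset.univ.image g).filter
    (fun v => (∑ x ∈ Finset.univ.filter (fun x => v < g x), d x) ≤ T/2) with hF
  have hFne : F.Nonempty := by
    refine ⟨(Finset.univ.image g).max' himg, Finset.mem_filter.2 ⟨Finset.max'_mem _ _, ?_⟩⟩
    have : Finset.univ.filter (fun x => (Finset.univ.image g).max' himg < g x) = ∅ := by
      apply Finset.filter_eq_empty_iff.2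
      intro x _
      exact not_lt.2 (Finset.le_max' _ _ (Finset.mem_image_of_mem g (Finset.mem_univ x)))
    rw [this]
    simp
    linarith
  set c : ℝ := F.min' hFne with hc
  have hcF : c ∈ F := Finset.min'_mem _ _
  have hprop1 : (∑ x ∈ Finset.univ.filter (fun x => c < g x), d x) ≤ T/2 :=
    (Finset.mem_filter.1 hcF).2
  refine ⟨c, hprop1, ?_⟩
  by_contra hcon
  push_neg at hcon
  have hsplit : (∑ x ∈ Finset.univ.filter (fun x => g x < c), d x)
      + (∑ x ∈ Finset.univ.filter (fun x => ¬ g x < c), d x) = T := by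
    rw [hT]
    exact Finset.sum_filter_add_sum_filter_not _ _ _
  have hge : (∑ x ∈ Finset.univ.filter (fun x => ¬ g x < c), d x) < T/2 := by linarith
  have hlt_ne : (Finset.univ.filter (fun x : V => g x < c)).Nonempty := by
    rw [Finset.nonempty_iff_ne_empty]
    intro h
    rw [h, Finset.sum_empty] at hcon
    linarith
  obtain ⟨x₀, hx₀⟩ := hlt_ne
  have hx₀lt : g x₀ < c := (Finset.mem_filter.1 hx₀).2
  have himg2 : ((Finset.univ.image g).filter (· < c)).Nonempty :=
    ⟨g x₀, Finset.mem_filter.2 ⟨Finset.mem_image_of_mem g (Finset.mem_univ x₀), hx₀lt⟩⟩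
  set c' : ℝ := ((Finset.univ.image g).filter (· < c)).max' himg2 with hc'
  have hc'mem := Finset.max'_mem _ himg2
  have hc'img : c' ∈ Finset.univ.image g := (Finset.mem_filter.1 hc'mem).1
  have hc'lt : c' < c := (Finset.mem_filter.1 hc'mem).2
  have hsets : Finset.univ.filter (fun x : V => c' < g x)
      = Finset.univ.filter (fun x => ¬ g x < c) := by
    ext x
    simp only [Finset.mem_filter, Finset.mem_univ, true_and]
    constructor
    · intro h
      intro hxc
      have : g x ≤ c' := Finset.le_max' ((Finset.univ.image g).filter (· < c)) (g x)
        (Finset.mem_filter.2 ⟨Finset.mem_image_of_mem g (Finset.mem_univ x), hxc⟩)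
      linarith
    · intro h
      have : c ≤ g x := not_lt.1 h
      linarith
  have hc'F : c' ∈ F := by
    rw [hF]
    refine Finset.mem_filter.2 ⟨hc'img, ?_⟩
    rw [hsets]
    linarith
  have : c ≤ c' := Finset.min'_le _ _ hc'F
  linarith

lemma posneg_sq (a : ℝ) : max a 0 ^ 2 + max (-a) 0 ^ 2 = a ^ 2 := by
  rcases le_total 0 a with h | h
  · rw [max_eq_left h, max_eq_right (neg_nonpos.2 h)]; ring
  · rw [max_eq_right h, max_eq_left (neg_nonneg.2 h)]; ring

lemma posneg_diff_sq (a b : ℝ) :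
    (max a 0 - max b 0) ^ 2 + (max (-a) 0 - max (-b) 0) ^ 2 ≤ (a - b) ^ 2 := by
  rcases le_total 0 a with ha | ha <;> rcases le_total 0 b with hb | hb
  · rw [max_eq_left ha, max_eq_left hb, max_eq_right (neg_nonpos.2 ha),
      max_eq_right (neg_nonpos.2 hb)]
    nlinarith
  · rw [max_eq_left ha, max_eq_right hb, max_eq_right (neg_nonpos.2 ha),
      max_eq_left (neg_nonneg.2 hb)]
    nlinarith [mul_nonneg ha (neg_nonneg.2 hb)]
  · rw [max_eq_right ha, max_eq_left hb, max_eq_left (neg_nonneg.2 ha),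
      max_eq_right (neg_nonpos.2 hb)]
    nlinarith [mul_nonneg (neg_nonneg.2 ha) hb]
  · rw [max_eq_right ha, max_eq_right hb, max_eq_left (neg_nonneg.2 ha),
      max_eq_left (neg_nonneg.2 hb)]
    nlinarith

end Median
section Sweep

lemma sweep {m n : ℕ} (B : Matrix (Fin m) (Fin n) ℝ) (hB : ∀ i j, 0 ≤ B i j)
    (hdpos : ∀ x, 0 < bipDeg B x)
    (ψ : (Fin m ⊕ Fin n) → ℝ) (hψ : ∀ x, 0 ≤ ψ x)
    (hsupp : bipVol B (Finset.univ.filter (fun x => 0 < ψ x)) ≤ bipVol B Finset.univ / 2)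
    (hN : 0 < ∑ x, bipDeg B x * ψ x ^ 2)
    (K : ℝ) (hK0 : 0 ≤ K)
    (hK : ∑ i, ∑ j, B i j * (ψ (Sum.inl i) - ψ (Sum.inr j))^2 ≤ K * ∑ x, bipDeg B x * ψ x ^ 2) :
    ∃ S : Finset (Fin m ⊕ Fin n), S.Nonempty ∧ bipVol B S ≤ bipVol B Finset.univ / 2 ∧
      (bipCut B S / bipVol B S)^2 ≤ 2 * K := by
  classical
  set N : ℝ := ∑ x, bipDeg B x * ψ x ^ 2 with hNdef
  set E : ℝ := ∑ i, ∑ j, B i j * (ψ (Sum.inl i) - ψ (Sum.inr j))^2 with hEdef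
  set T : Finset ℝ := (Finset.univ.image (fun x => ψ x ^ 2)).filter (fun t => 0 < t) with hTdef
  have hT : ∀ t ∈ T, 0 < t := fun t ht => (Finset.mem_filter.1 ht).2
  set L : ℝ → Finset (Fin m ⊕ Fin n) := fun t => Finset.univ.filter (fun x => t ≤ ψ x ^ 2)
    with hLdef
  have hvalT : ∀ x, ψ x ^ 2 = 0 ∨ ψ x ^ 2 ∈ T := by
    intro x
    rcases eq_or_lt_of_le (hψ x) with h | h
    · exact Or.inl (by rw [← h]; ring)
    · exact Or.inr (Finset.mem_filter.2 ⟨Finset.mem_image_of_mem _ (Finset.mem_univ x),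
        by positivity⟩)
  -- coarea for volume
  have hLvol : ∀ t, bipVol B (L t) = ∑ x, (if t ≤ ψ x ^ 2 then bipDeg B x else 0) := by
    intro t
    rw [bipVol_eq_sum, hLdef]
    exact Finset.sum_filter _ _
  have coarea_vol : ∑ t ∈ T, (t - predT T t) * bipVol B (L t) = N := by
    have h1 : ∀ t ∈ T, (t - predT T t) * bipVol B (L t)
        = ∑ x, bipDeg B x * ((t - predT T t) * (if t ≤ ψ x ^ 2 then 1 else 0)) := by
      intro t _
      rw [hLvol, Finset.mul_sum]
      exact Finset.sum_congr rfl fun x _ => by split_ifs <;> ring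
    rw [Finset.sum_congr rfl h1, Finset.sum_comm]
    rw [hNdef]
    apply Finset.sum_congr rfl
    intro x _
    rw [← Finset.mul_sum]
    rw [telescope T hT (ψ x ^ 2) (hvalT x)]
  -- coarea for cut
  have coarea_cut : ∑ t ∈ T, (t - predT T t) * bipCut B (L t)
      = ∑ i, ∑ j, B i j * |ψ (Sum.inl i) ^ 2 - ψ (Sum.inr j) ^ 2| := by
    have h1 : ∀ t ∈ T, (t - predT T t) * bipCut B (L t)
        = ∑ i, ∑ j, B i j * ((t - predT T t) *
          ((if Sum.inl i ∈ L t ∧ Sum.inr j ∉ L t then 1 else 0) +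
           (if Sum.inr j ∈ L t ∧ Sum.inl i ∉ L t then 1 else 0))) := by
      intro t _
      rw [bipCut_eq, Finset.mul_sum]
      apply Finset.sum_congr rfl
      intro i _
      rw [Finset.mul_sum]
      exact Finset.sum_congr rfl fun j _ => by ring
    rw [Finset.sum_congr rfl h1, Finset.sum_comm]
    apply Finset.sum_congr rfl
    intro i _
    rw [Finset.sum_comm]
    apply Finset.sum_congr rfl
    intro j _
    rw [← Finset.mul_sum]
    congr 1
    -- per-edge telescoping
    set a : ℝ := ψ (Sum.inl i) ^ 2 with hadef
    set b : ℝ := ψ (Sum.inr j) ^ 2 with hbdef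
    have hind : ∀ t ∈ T,
        (t - predT T t) * ((if Sum.inl i ∈ L t ∧ Sum.inr j ∉ L t then 1 else 0) +
           (if Sum.inr j ∈ L t ∧ Sum.inl i ∉ L t then 1 else 0))
        = (t - predT T t) * (if t ≤ max a b then 1 else 0)
          - (t - predT T t) * (if t ≤ min a b then 1 else 0) := by
      intro t _
      have m1 : (Sum.inl i ∈ L t) ↔ (t ≤ a) := by
        rw [hadef]
        exact ⟨fun h => (Finset.mem_filter.1 h).2,
          fun h => Finset.mem_filter.2 ⟨Finset.mem_univ _, h⟩⟩
      have m2 : (Sum.inr j ∈ L t) ↔ (t ≤ b) := by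
        rw [hbdef]
        exact ⟨fun h => (Finset.mem_filter.1 h).2,
          fun h => Finset.mem_filter.2 ⟨Finset.mem_univ _, h⟩⟩
      have c1 : (Sum.inl i ∈ L t ∧ Sum.inr j ∉ L t) ↔ (t ≤ a ∧ ¬ t ≤ b) :=
        and_congr m1 (not_congr m2)
      have c2 : (Sum.inr j ∈ L t ∧ Sum.inl i ∉ L t) ↔ (t ≤ b ∧ ¬ t ≤ a) :=
        and_congr m2 (not_congr m1)
      rw [if_congr c1 rfl rfl, if_congr c2 rfl rfl]
      rcases le_total a b with hab | hab
      · rw [max_eq_right hab, min_eq_left hab]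
        by_cases h1 : t ≤ a <;> by_cases h2 : t ≤ b
        · rw [if_pos h1, if_pos h2]
          rw [if_neg (by intro h; exact h.2 h2), if_neg (by intro h; exact h.2 h1)]
          ring
        · exact absurd (h1.trans hab) h2
        · rw [if_pos h2, if_neg h1]
          rw [if_neg (by intro h; exact absurd h.1 h1), if_pos ⟨h2, h1⟩]
          ring
        · rw [if_neg h1, if_neg h2]
          rw [if_neg (by intro h; exact absurd h.1 h1), if_neg (by intro h; exact absurd h.1 h2)]
          ring
      · rw [max_eq_left hab, min_eq_right hab]
        by_cases h1 : t ≤ a <;> by_cases h2 : t ≤ b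
        · rw [if_pos h1, if_pos h2]
          rw [if_neg (by intro h; exact h.2 h2), if_neg (by intro h; exact h.2 h1)]
          ring
        · rw [if_pos h1, if_neg h2]
          rw [if_pos ⟨h1, h2⟩, if_neg (by intro h; exact absurd h.1 h2)]
          ring
        · exact absurd (h2.trans hab) h1
        · rw [if_neg h1, if_neg h2]
          rw [if_neg (by intro h; exact absurd h.1 h1), if_neg (by intro h; exact absurd h.1 h2)]
          ring
    rw [Finset.sum_congr rfl hind, Finset.sum_sub_distrib]
    have hmaxT : max a b = 0 ∨ max a b ∈ T := by
      rcases le_total a b with h | h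
      · rw [max_eq_right h]; exact hvalT _
      · rw [max_eq_left h]; exact hvalT _
    have hminT : min a b = 0 ∨ min a b ∈ T := by
      rcases le_total a b with h | h
      · rw [min_eq_left h]; exact hvalT _
      · rw [min_eq_right h]; exact hvalT _
    rw [telescope T hT _ hmaxT, telescope T hT _ hminT]
    rw [← max_sub_min_eq_abs]
    rw [max_comm, min_comm]
  -- T is nonempty and volumes are positive
  have hTne : T.Nonempty := by
    by_contra h
    rw [Finset.not_nonempty_iff_eq_empty] at h
    have : N ≤ 0 := by
      rw [hNdef]
      apply Finset.sum_nonpos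
      intro x _
      rcases hvalT x with hx | hx
      · rw [hx]; simp
      · rw [h] at hx; exact absurd hx (Finset.notMem_empty _)
    linarith
  have hvolpos : ∀ t ∈ T, 0 < bipVol B (L t) := by
    intro t ht
    obtain ⟨x, _, hx⟩ := Finset.mem_image.1 (Finset.mem_filter.1 ht).1
    have hxL : x ∈ L t := Finset.mem_filter.2 ⟨Finset.mem_univ x, le_of_eq hx.symm⟩
    rw [bipVol_eq_sum]
    exact lt_of_lt_of_le (hdpos x) (Finset.single_le_sum (fun y _ => (hdpos y).le) hxL)
  -- minimizing threshold
  obtain ⟨t₀, ht₀T, ht₀min⟩ := Finset.exists_min_image T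
    (fun t => bipCut B (L t) / bipVol B (L t)) hTne
  set ρ : ℝ := bipCut B (L t₀) / bipVol B (L t₀) with hρdef
  have hρ0 : 0 ≤ ρ := div_nonneg (bipCut_nonneg B hB _) (bipVol_nonneg B hB _)
  have hρvol : ∀ t ∈ T, ρ * bipVol B (L t) ≤ bipCut B (L t) := by
    intro t ht
    have h1 : ρ ≤ bipCut B (L t) / bipVol B (L t) := ht₀min t ht
    have h2 := hvolpos t ht
    calc ρ * bipVol B (L t) ≤ (bipCut B (L t) / bipVol B (L t)) * bipVol B (L t) :=
          mul_le_mul_of_nonneg_right h1 h2.le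
      _ = bipCut B (L t) := div_mul_cancel₀ _ (ne_of_gt h2)
  have hgap : ∀ t ∈ T, 0 ≤ t - predT T t := fun t ht => (sub_pos.2 (predT_lt (hT t ht))).le
  set W : ℝ := ∑ i, ∑ j, B i j * |ψ (Sum.inl i) ^ 2 - ψ (Sum.inr j) ^ 2| with hWdef
  have hρN : ρ * N ≤ W := by
    rw [← coarea_cut, ← coarea_vol, Finset.mul_sum]
    apply Finset.sum_le_sum
    intro t ht
    calc ρ * ((t - predT T t) * bipVol B (L t)) = (t - predT T t) * (ρ * bipVol B (L t)) := by
          ring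
      _ ≤ (t - predT T t) * bipCut B (L t) :=
          mul_le_mul_of_nonneg_left (hρvol t ht) (hgap t ht)
  -- Cauchy-Schwarz
  have hCS := Finset.sum_mul_sq_le_sq_mul_sq Finset.univ
    (fun p : Fin m × Fin n => Real.sqrt (B p.1 p.2) * |ψ (Sum.inl p.1) - ψ (Sum.inr p.2)|)
    (fun p : Fin m × Fin n => Real.sqrt (B p.1 p.2) * (ψ (Sum.inl p.1) + ψ (Sum.inr p.2)))
  have hS1 : ∑ p : Fin m × Fin n,
      (Real.sqrt (B p.1 p.2) * |ψ (Sum.inl p.1) - ψ (Sum.inr p.2)|) *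
      (Real.sqrt (B p.1 p.2) * (ψ (Sum.inl p.1) + ψ (Sum.inr p.2))) = W := by
    rw [hWdef, Fintype.sum_prod_type]
    apply Finset.sum_congr rfl; intro i _
    apply Finset.sum_congr rfl; intro j _
    have h1 : Real.sqrt (B i j) * Real.sqrt (B i j) = B i j :=
      Real.mul_self_sqrt (hB i j)
    have h2 : |ψ (Sum.inl i) - ψ (Sum.inr j)| * (ψ (Sum.inl i) + ψ (Sum.inr j))
        = |ψ (Sum.inl i) ^ 2 - ψ (Sum.inr j) ^ 2| := by
      have hadd : 0 ≤ ψ (Sum.inl i) + ψ (Sum.inr j) := by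
        have := hψ (Sum.inl i); have := hψ (Sum.inr j); linarith
      rw [← abs_of_nonneg hadd, ← abs_mul]
      congr 1
      ring
    calc (Real.sqrt (B i j) * |ψ (Sum.inl i) - ψ (Sum.inr j)|) *
        (Real.sqrt (B i j) * (ψ (Sum.inl i) + ψ (Sum.inr j)))
        = (Real.sqrt (B i j) * Real.sqrt (B i j)) *
          (|ψ (Sum.inl i) - ψ (Sum.inr j)| * (ψ (Sum.inl i) + ψ (Sum.inr j))) := by ring
      _ = B i j * |ψ (Sum.inl i) ^ 2 - ψ (Sum.inr j) ^ 2| := by rw [h1, h2]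
  have hS2 : ∑ p : Fin m × Fin n,
      (Real.sqrt (B p.1 p.2) * |ψ (Sum.inl p.1) - ψ (Sum.inr p.2)|) ^ 2 = E := by
    rw [hEdef, Fintype.sum_prod_type]
    apply Finset.sum_congr rfl; intro i _
    apply Finset.sum_congr rfl; intro j _
    rw [mul_pow, Real.sq_sqrt (hB i j), sq_abs]
  have hNsplit : N = ∑ i, bipDeg B (Sum.inl i) * ψ (Sum.inl i) ^ 2
      + ∑ j, bipDeg B (Sum.inr j) * ψ (Sum.inr j) ^ 2 := by
    rw [hNdef, Fintype.sum_sum_type]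
  have hS3 : ∑ p : Fin m × Fin n,
      (Real.sqrt (B p.1 p.2) * (ψ (Sum.inl p.1) + ψ (Sum.inr p.2))) ^ 2 ≤ 2 * N := by
    have hstep : ∀ p : Fin m × Fin n,
        (Real.sqrt (B p.1 p.2) * (ψ (Sum.inl p.1) + ψ (Sum.inr p.2))) ^ 2
        ≤ 2 * B p.1 p.2 * ψ (Sum.inl p.1) ^ 2 + 2 * B p.1 p.2 * ψ (Sum.inr p.2) ^ 2 := by
      intro p
      rw [mul_pow, Real.sq_sqrt (hB p.1 p.2)]
      nlinarith [hB p.1 p.2, sq_nonneg (ψ (Sum.inl p.1) - ψ (Sum.inr p.2)),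
        sq_nonneg (ψ (Sum.inl p.1) + ψ (Sum.inr p.2))]
    calc ∑ p : Fin m × Fin n,
        (Real.sqrt (B p.1 p.2) * (ψ (Sum.inl p.1) + ψ (Sum.inr p.2))) ^ 2
        ≤ ∑ p : Fin m × Fin n, (2 * B p.1 p.2 * ψ (Sum.inl p.1) ^ 2
            + 2 * B p.1 p.2 * ψ (Sum.inr p.2) ^ 2) :=
          Finset.sum_le_sum fun p _ => hstep p
      _ = 2 * N := by
          rw [Fintype.sum_prod_type, hNsplit]
          rw [Finset.sum_congr rfl (fun i (_ : i ∈ Finset.univ) => Finset.sum_add_distrib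
            (s := Finset.univ)
            (f := fun j => 2 * B i j * ψ (Sum.inl i) ^ 2)
            (g := fun j => 2 * B i j * ψ (Sum.inr j) ^ 2))]
          rw [Finset.sum_add_distrib]
          have e1 : ∑ i, ∑ j, 2 * B i j * ψ (Sum.inl i) ^ 2
              = 2 * ∑ i, bipDeg B (Sum.inl i) * ψ (Sum.inl i) ^ 2 := by
            rw [Finset.mul_sum]
            apply Finset.sum_congr rfl; intro i _
            rw [bipDeg_inl, Finset.sum_mul, Finset.mul_sum]
            apply Finset.sum_congr rfl; intro j _
            ring
          have e2 : ∑ i, ∑ j, 2 * B i j * ψ (Sum.inr j) ^ 2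
              = 2 * ∑ j, bipDeg B (Sum.inr j) * ψ (Sum.inr j) ^ 2 := by
            rw [Finset.sum_comm, Finset.mul_sum]
            apply Finset.sum_congr rfl; intro j _
            rw [bipDeg_inr, Finset.sum_mul, Finset.mul_sum]
            apply Finset.sum_congr rfl; intro i _
            ring
          rw [e1, e2]
          ring
  have hW0 : 0 ≤ W := le_trans (mul_nonneg hρ0 hN.le) hρN
  have hE0 : 0 ≤ E := by
    rw [hEdef]
    apply Finset.sum_nonneg; intro i _
    apply Finset.sum_nonneg; intro j _
    exact mul_nonneg (hB i j) (sq_nonneg _)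
  have hW2 : W ^ 2 ≤ 2 * K * N ^ 2 := by
    have h1 : W ^ 2 ≤ E * (2 * N) := by
      rw [← hS1]
      calc (∑ p : Fin m × Fin n,
          (Real.sqrt (B p.1 p.2) * |ψ (Sum.inl p.1) - ψ (Sum.inr p.2)|) *
          (Real.sqrt (B p.1 p.2) * (ψ (Sum.inl p.1) + ψ (Sum.inr p.2)))) ^ 2
          ≤ (∑ p : Fin m × Fin n,
            (Real.sqrt (B p.1 p.2) * |ψ (Sum.inl p.1) - ψ (Sum.inr p.2)|) ^ 2) *
            (∑ p : Fin m × Fin n,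
            (Real.sqrt (B p.1 p.2) * (ψ (Sum.inl p.1) + ψ (Sum.inr p.2))) ^ 2) := hCS
        _ ≤ E * (2 * N) := by
            rw [hS2]
            exact mul_le_mul_of_nonneg_left hS3 hE0
    calc W ^ 2 ≤ E * (2 * N) := h1
      _ ≤ (K * N) * (2 * N) := mul_le_mul_of_nonneg_right hK (by linarith)
      _ = 2 * K * N ^ 2 := by ring
  have hρ2 : ρ ^ 2 ≤ 2 * K := by
    have h1 : (ρ * N) ^ 2 ≤ W ^ 2 := by
      apply sq_le_sq'
      · linarith [mul_nonneg hρ0 hN.le]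
      · exact hρN
    have h2 : ρ ^ 2 * N ^ 2 ≤ 2 * K * N ^ 2 := by
      calc ρ ^ 2 * N ^ 2 = (ρ * N) ^ 2 := by ring
        _ ≤ W ^ 2 := h1
        _ ≤ 2 * K * N ^ 2 := hW2
    have hN2 : 0 < N ^ 2 := by positivity
    exact le_of_mul_le_mul_right (by linarith [h2]) hN2
  -- the witness set
  obtain ⟨x₀, _, hx₀⟩ := Finset.mem_image.1 (Finset.mem_filter.1 ht₀T).1
  have ht₀pos : 0 < t₀ := hT t₀ ht₀T
  have hx₀L : x₀ ∈ L t₀ := Finset.mem_filter.2 ⟨Finset.mem_univ x₀, le_of_eq hx₀.symm⟩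
  have hsub : L t₀ ⊆ Finset.univ.filter (fun x => 0 < ψ x) := by
    intro x hx
    have hx2 : t₀ ≤ ψ x ^ 2 := (Finset.mem_filter.1 hx).2
    refine Finset.mem_filter.2 ⟨Finset.mem_univ x, ?_⟩
    rcases eq_or_lt_of_le (hψ x) with h | h
    · exfalso
      have : ψ x ^ 2 = 0 := by rw [← h]; ring
      rw [this] at hx2
      linarith
    · exact h
  have hvolle : bipVol B (L t₀) ≤ bipVol B Finset.univ / 2 := by
    refine le_trans ?_ hsupp
    rw [bipVol_eq_sum, bipVol_eq_sum]
    exact Finset.sum_le_sum_of_subset_of_nonneg hsub (fun x _ _ => (hdpos x).le)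
  exact ⟨L t₀, ⟨x₀, hx₀L⟩, hvolle, hρ2⟩

end Sweep
section Cheeger

lemma cheeger_main {m n : ℕ} (hm : 0 < m) (hn : 0 < n) (B : Matrix (Fin m) (Fin n) ℝ)
    (hB : ∀ i j, 0 ≤ B i j) (hdpos : ∀ x, 0 < bipDeg B x)
    (lam : ℝ) (hlam1 : lam ≤ 1)
    (f : (Fin m ⊕ Fin n) → ℝ)
    (hfw : ∑ x, f x * Real.sqrt (bipDeg B x) = 0)
    (hfpos : 0 < ∑ x, f x ^ 2)
    (hfq : lam * ∑ x, f x ^ 2 ≤ 2 * ∑ i, ∑ j,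
      (B i j / (Real.sqrt (bipDeg B (Sum.inl i)) * Real.sqrt (bipDeg B (Sum.inr j))))
        * f (Sum.inl i) * f (Sum.inr j)) :
    ∃ x ∈ condSet B, x ^ 2 ≤ 2 * (1 - lam) := by
  classical
  have hnonempty : Nonempty (Fin m ⊕ Fin n) := ⟨Sum.inl ⟨0, hm⟩⟩
  set d : (Fin m ⊕ Fin n) → ℝ := bipDeg B with hd
  have hdsqrt : ∀ x, 0 < Real.sqrt (d x) := fun x => Real.sqrt_pos.2 (hdpos x)
  set g : (Fin m ⊕ Fin n) → ℝ := fun x => f x / Real.sqrt (d x) with hg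
  have hdg2 : ∀ x, d x * g x ^ 2 = f x ^ 2 := by
    intro x
    have hd2 : Real.sqrt (d x) ^ 2 = d x := Real.sq_sqrt (hdpos x).le
    show d x * (f x / Real.sqrt (d x)) ^ 2 = f x ^ 2
    rw [div_pow, hd2, mul_comm, div_mul_cancel₀ _ (ne_of_gt (hdpos x))]
  have hN : ∑ x, d x * g x ^ 2 = ∑ x, f x ^ 2 :=
    Finset.sum_congr rfl fun x _ => hdg2 x
  have hmean : ∑ x, d x * g x = 0 := by
    rw [← hfw]
    apply Finset.sum_congr rfl
    intro x _
    have hne : Real.sqrt (d x) ≠ 0 := ne_of_gt (hdsqrt x)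
    show d x * (f x / Real.sqrt (d x)) = f x * Real.sqrt (d x)
    rw [← Real.mul_self_sqrt (hdpos x).le]
    field_simp
    rw [Real.sqrt_sq (Real.sqrt_nonneg _)]; ring
  have hBgg : ∀ i j, B i j * (g (Sum.inl i) * g (Sum.inr j))
      = (B i j / (Real.sqrt (d (Sum.inl i)) * Real.sqrt (d (Sum.inr j))))
        * f (Sum.inl i) * f (Sum.inr j) := by
    intro i j
    show B i j * (f (Sum.inl i) / Real.sqrt (d (Sum.inl i)) * (f (Sum.inr j) / Real.sqrt (d (Sum.inr j))))
      = B i j / (Real.sqrt (d (Sum.inl i)) * Real.sqrt (d (Sum.inr j))) * f (Sum.inl i) * f (Sum.inr j)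
    field_simp
  -- Dirichlet identity for g
  have dirichlet : ∀ u : (Fin m ⊕ Fin n) → ℝ,
      ∑ i, ∑ j, B i j * (u (Sum.inl i) - u (Sum.inr j)) ^ 2
      = ∑ x, d x * u x ^ 2 - 2 * ∑ i, ∑ j, B i j * (u (Sum.inl i) * u (Sum.inr j)) := by
    intro u
    have expand : ∀ i j, B i j * (u (Sum.inl i) - u (Sum.inr j)) ^ 2
        = B i j * u (Sum.inl i) ^ 2 + B i j * u (Sum.inr j) ^ 2
          - 2 * (B i j * (u (Sum.inl i) * u (Sum.inr j))) := by
      intro i j; ring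
    have e0 : ∑ i, ∑ j, B i j * (u (Sum.inl i) - u (Sum.inr j)) ^ 2
        = (∑ i, ∑ j, B i j * u (Sum.inl i) ^ 2) + (∑ i, ∑ j, B i j * u (Sum.inr j) ^ 2)
          - 2 * ∑ i, ∑ j, B i j * (u (Sum.inl i) * u (Sum.inr j)) := by
      rw [Finset.mul_sum, ← Finset.sum_add_distrib, ← Finset.sum_sub_distrib]
      apply Finset.sum_congr rfl; intro i _
      rw [Finset.mul_sum, ← Finset.sum_add_distrib, ← Finset.sum_sub_distrib]
      exact Finset.sum_congr rfl fun j _ => expand i j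
    have e1 : ∑ i, ∑ j, B i j * u (Sum.inl i) ^ 2 = ∑ i, d (Sum.inl i) * u (Sum.inl i) ^ 2 := by
      apply Finset.sum_congr rfl; intro i _
      rw [hd, bipDeg_inl]
      exact (Finset.sum_mul _ _ _).symm
    have e2 : ∑ i, ∑ j, B i j * u (Sum.inr j) ^ 2 = ∑ j, d (Sum.inr j) * u (Sum.inr j) ^ 2 := by
      rw [Finset.sum_comm]
      apply Finset.sum_congr rfl; intro j _
      rw [hd, bipDeg_inr]
      exact (Finset.sum_mul _ _ _).symm
    have e3 : ∑ x, d x * u x ^ 2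
        = (∑ i, d (Sum.inl i) * u (Sum.inl i) ^ 2) + ∑ j, d (Sum.inr j) * u (Sum.inr j) ^ 2 :=
      Fintype.sum_sum_type _
    rw [e0, e1, e2, e3]
  -- Dirichlet bound for g
  have hEg : ∑ i, ∑ j, B i j * (g (Sum.inl i) - g (Sum.inr j)) ^ 2
      ≤ (1 - lam) * ∑ x, d x * g x ^ 2 := by
    rw [dirichlet g]
    have h2 : lam * ∑ x, d x * g x ^ 2 ≤ 2 * ∑ i, ∑ j, B i j * (g (Sum.inl i) * g (Sum.inr j)) := by
      rw [hN]
      calc lam * ∑ x, f x ^ 2 ≤ 2 * ∑ i, ∑ j,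
          (B i j / (Real.sqrt (d (Sum.inl i)) * Real.sqrt (d (Sum.inr j))))
            * f (Sum.inl i) * f (Sum.inr j) := hfq
        _ = 2 * ∑ i, ∑ j, B i j * (g (Sum.inl i) * g (Sum.inr j)) := by
            congr 1
            exact Finset.sum_congr rfl fun i _ => Finset.sum_congr rfl fun j _ => (hBgg i j).symm
    linarith
  -- median
  obtain ⟨c, hc1, hc2⟩ := exists_median d g (fun x => (hdpos x).le)
  have htotvol : ∑ x, d x = bipVol B Finset.univ := (bipVol_eq_sum B Finset.univ).symm
  set h : (Fin m ⊕ Fin n) → ℝ := fun x => g x - c with hh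
  set ψp : (Fin m ⊕ Fin n) → ℝ := fun x => max (h x) 0 with hψp
  set ψm : (Fin m ⊕ Fin n) → ℝ := fun x => max (-h x) 0 with hψm
  have hEh : ∑ i, ∑ j, B i j * (h (Sum.inl i) - h (Sum.inr j)) ^ 2
      = ∑ i, ∑ j, B i j * (g (Sum.inl i) - g (Sum.inr j)) ^ 2 := by
    apply Finset.sum_congr rfl; intro i _
    apply Finset.sum_congr rfl; intro j _
    show B i j * ((g (Sum.inl i) - c) - (g (Sum.inr j) - c)) ^ 2
      = B i j * (g (Sum.inl i) - g (Sum.inr j)) ^ 2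
    ring_nf
  have hNh : ∑ x, d x * g x ^ 2 ≤ ∑ x, d x * h x ^ 2 := by
    have expand : ∀ x, d x * h x ^ 2
        = (d x * g x ^ 2 + c ^ 2 * d x) - 2 * c * (d x * g x) := by
      intro x
      show d x * (g x - c) ^ 2 = (d x * g x ^ 2 + c ^ 2 * d x) - 2 * c * (d x * g x)
      ring
    rw [Finset.sum_congr rfl fun x _ => expand x]
    rw [Finset.sum_sub_distrib, Finset.sum_add_distrib, ← Finset.mul_sum, ← Finset.mul_sum, hmean]
    have : 0 ≤ c ^ 2 * ∑ x, d x :=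
      mul_nonneg (sq_nonneg c) (Finset.sum_nonneg fun x _ => (hdpos x).le)
    linarith
  -- split into positive and negative parts
  have hsq_split : ∀ x, d x * ψp x ^ 2 + d x * ψm x ^ 2 = d x * h x ^ 2 := by
    intro x
    show d x * max (h x) 0 ^ 2 + d x * max (-h x) 0 ^ 2 = d x * h x ^ 2
    rw [← mul_add, posneg_sq]
  have hE_split : (∑ i, ∑ j, B i j * (ψp (Sum.inl i) - ψp (Sum.inr j)) ^ 2)
      + (∑ i, ∑ j, B i j * (ψm (Sum.inl i) - ψm (Sum.inr j)) ^ 2)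
      ≤ ∑ i, ∑ j, B i j * (h (Sum.inl i) - h (Sum.inr j)) ^ 2 := by
    rw [← Finset.sum_add_distrib]
    apply Finset.sum_le_sum; intro i _
    rw [← Finset.sum_add_distrib]
    apply Finset.sum_le_sum; intro j _
    rw [← mul_add]
    exact mul_le_mul_of_nonneg_left (posneg_diff_sq _ _) (hB i j)
  have hNh_split : (∑ x, d x * ψp x ^ 2) + (∑ x, d x * ψm x ^ 2) = ∑ x, d x * h x ^ 2 := by
    rw [← Finset.sum_add_distrib]
    exact Finset.sum_congr rfl fun x _ => hsq_split x
  set Ep : ℝ := ∑ i, ∑ j, B i j * (ψp (Sum.inl i) - ψp (Sum.inr j)) ^ 2 with hEp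
  set Em : ℝ := ∑ i, ∑ j, B i j * (ψm (Sum.inl i) - ψm (Sum.inr j)) ^ 2 with hEm
  set Np : ℝ := ∑ x, d x * ψp x ^ 2 with hNp
  set Nm : ℝ := ∑ x, d x * ψm x ^ 2 with hNm
  have hEp0 : 0 ≤ Ep := Finset.sum_nonneg fun i _ => Finset.sum_nonneg fun j _ =>
    mul_nonneg (hB i j) (sq_nonneg _)
  have hEm0 : 0 ≤ Em := Finset.sum_nonneg fun i _ => Finset.sum_nonneg fun j _ =>
    mul_nonneg (hB i j) (sq_nonneg _)
  have hNp0 : 0 ≤ Np := Finset.sum_nonneg fun x _ =>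
    mul_nonneg (hdpos x).le (sq_nonneg _)
  have hNm0 : 0 ≤ Nm := Finset.sum_nonneg fun x _ =>
    mul_nonneg (hdpos x).le (sq_nonneg _)
  have hNgpos : 0 < ∑ x, d x * g x ^ 2 := by rw [hN]; exact hfpos
  have hsum_le : Ep + Em ≤ (1 - lam) * (Np + Nm) := by
    calc Ep + Em ≤ ∑ i, ∑ j, B i j * (h (Sum.inl i) - h (Sum.inr j)) ^ 2 := hE_split
      _ = ∑ i, ∑ j, B i j * (g (Sum.inl i) - g (Sum.inr j)) ^ 2 := hEh
      _ ≤ (1 - lam) * ∑ x, d x * g x ^ 2 := hEg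
      _ ≤ (1 - lam) * ∑ x, d x * h x ^ 2 :=
          mul_le_mul_of_nonneg_left hNh (by linarith)
      _ = (1 - lam) * (Np + Nm) := by rw [hNh_split]
  have hNpm_pos : 0 < Np + Nm := by
    rw [hNh_split]
    linarith
  -- supports
  have hsupp_p : bipVol B (Finset.univ.filter (fun x => 0 < ψp x)) ≤ bipVol B Finset.univ / 2 := by
    have hset : Finset.univ.filter (fun x => 0 < ψp x)
        = Finset.univ.filter (fun x => c < g x) := by
      apply Finset.filter_congr
      intro x _
      show 0 < max (g x - c) 0 ↔ c < g x
      constructor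
      · intro hlt
        by_contra hcon
        push_neg at hcon
        rw [max_eq_right (by linarith : g x - c ≤ 0)] at hlt
        exact lt_irrefl 0 hlt
      · intro hlt
        rw [max_eq_left (by linarith : (0:ℝ) ≤ g x - c)]
        linarith
    rw [bipVol_eq_sum, hset, ← htotvol]
    exact le_trans hc1 (by linarith [hc1])
  have hsupp_m : bipVol B (Finset.univ.filter (fun x => 0 < ψm x)) ≤ bipVol B Finset.univ / 2 := by
    have hset : Finset.univ.filter (fun x => 0 < ψm x)
        = Finset.univ.filter (fun x => g x < c) := by
      apply Finset.filter_congr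
      intro x _
      show 0 < max (-(g x - c)) 0 ↔ g x < c
      constructor
      · intro hlt
        by_contra hcon
        push_neg at hcon
        rw [max_eq_right (by linarith : -(g x - c) ≤ 0)] at hlt
        exact lt_irrefl 0 hlt
      · intro hlt
        rw [max_eq_left (by linarith : (0:ℝ) ≤ -(g x - c))]
        linarith
    rw [bipVol_eq_sum, hset, ← htotvol]
    exact le_trans hc2 (by linarith [hc2])
  -- choose the good part
  have hchoice : (0 < Np ∧ Ep ≤ (1 - lam) * Np) ∨ (0 < Nm ∧ Em ≤ (1 - lam) * Nm) := by
    by_cases hp : 0 < Np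
    · by_cases hEpb : Ep ≤ (1 - lam) * Np
      · exact Or.inl ⟨hp, hEpb⟩
      · push_neg at hEpb
        by_cases hmn : 0 < Nm
        · refine Or.inr ⟨hmn, ?_⟩
          nlinarith
        · exfalso
          have hNm0' : Nm = 0 := le_antisymm (not_lt.1 hmn) hNm0
          rw [hNm0'] at hsum_le
          nlinarith
    · have hNp0' : Np = 0 := le_antisymm (not_lt.1 hp) hNp0
      refine Or.inr ⟨?_, ?_⟩
      · rw [hNp0'] at hNpm_pos; linarith
      · rw [hNp0'] at hsum_le; linarith
  have hψp_nonneg : ∀ x, 0 ≤ ψp x := fun x => le_max_right _ _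
  have hψm_nonneg : ∀ x, 0 ≤ ψm x := fun x => le_max_right _ _
  have hK0 : (0:ℝ) ≤ 1 - lam := by linarith
  rcases hchoice with ⟨hpos, hbd⟩ | ⟨hpos, hbd⟩
  · obtain ⟨S, hSne, hSvol, hScut⟩ := sweep B hB hdpos ψp hψp_nonneg hsupp_p hpos (1 - lam) hK0 hbd
    exact ⟨bipCut B S / bipVol B S, ⟨S, hSne, hSvol, rfl⟩, hScut⟩
  · obtain ⟨S, hSne, hSvol, hScut⟩ := sweep B hB hdpos ψm hψm_nonneg hsupp_m hpos (1 - lam) hK0 hbd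
    exact ⟨bipCut B S / bipVol B S, ⟨S, hSne, hSvol, rfl⟩, hScut⟩

end Cheeger
section Spectral

-- sv interface via srt
lemma svList_eq_srt {m n : ℕ} (A : Matrix (Fin m) (Fin n) ℝ) :
    svList A = srt (fun i => Real.sqrt ((Matrix.isHermitian_transpose_mul_self A).eigenvalues i)) :=
  rfl

lemma sv_eq_getD {m n : ℕ} (A : Matrix (Fin m) (Fin n) ℝ) (k : ℕ) :
    sv A k = (srt (fun i =>
      Real.sqrt ((Matrix.isHermitian_transpose_mul_self A).eigenvalues i))).getD (k-1) 0 := rfl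

lemma sv_nonneg {m n : ℕ} (A : Matrix (Fin m) (Fin n) ℝ) (k : ℕ) : 0 ≤ sv A k := by
  rw [sv_eq_getD]
  exact srt_getD_nonneg _ (fun i => Real.sqrt_nonneg _) _

lemma eigen_tmul_nonneg {m n : ℕ} (A : Matrix (Fin m) (Fin n) ℝ) (i : Fin n) :
    0 ≤ (Matrix.isHermitian_transpose_mul_self A).eigenvalues i := by
  have h := Matrix.posSemidef_conjTranspose_mul_self A
  rw [Matrix.conjTranspose_eq_transpose_of_trivial] at h
  exact h.eigenvalues_nonneg i

/-- if ‖Cv‖² ≤ ‖v‖² for all v then all singular values are ≤ 1 -/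
lemma sv_le_one {m n : ℕ} (C : Matrix (Fin m) (Fin n) ℝ)
    (hop : ∀ v : Fin n → ℝ, ∑ i, (C *ᵥ v) i ^ 2 ≤ ∑ j, v j ^ 2) (k : ℕ) : sv C k ≤ 1 := by
  rw [sv_eq_getD]
  apply srt_getD_le _ 1 zero_le_one
  intro i
  set hC := Matrix.isHermitian_transpose_mul_self C
  have h1 : hC.eigenvalues i ≤ 1 := by
    have h2 := gram_dot C i i
    rw [if_pos rfl, mul_one] at h2
    have h3 := eigen_orth hC i i
    rw [if_pos rfl] at h3
    have h6 : ∑ i_1, (C *ᵥ ev hC i) i_1 * (C *ᵥ ev hC i) i_1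
        = ∑ i_1, (C *ᵥ ev hC i) i_1 ^ 2 :=
      Finset.sum_congr rfl fun x _ => (sq _).symm
    rw [h6] at h2
    have h5 : ∑ x, ev hC i x ^ 2 = 1 := by
      rw [← h3]
      exact Finset.sum_congr rfl fun x _ => sq (ev hC i x)
    calc hC.eigenvalues i = ∑ i_1, (C *ᵥ ev hC i) i_1 ^ 2 := h2.symm
      _ ≤ ∑ j, ev hC i j ^ 2 := hop _
      _ = 1 := h5
  calc Real.sqrt (hC.eigenvalues i) ≤ Real.sqrt 1 := Real.sqrt_le_sqrt h1
    _ = 1 := Real.sqrt_one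

/-- existence of the test vector for the Cheeger argument -/
lemma exists_test_vector {m n : ℕ} (C : Matrix (Fin m) (Fin n) ℝ)
    (hn2 : 2 ≤ n) (lam : ℝ) (hlam : 0 < lam) (hlam_le : lam ≤ sv C 2)
    (w : (Fin m ⊕ Fin n) → ℝ) :
    ∃ f : (Fin m ⊕ Fin n) → ℝ,
      (∑ x, f x * w x = 0) ∧ 0 < ∑ x, f x ^ 2 ∧
      lam * ∑ x, f x ^ 2 ≤ 2 * ∑ i, ∑ j, C i j * f (Sum.inl i) * f (Sum.inr j) := by
  classical
  set hC := Matrix.isHermitian_transpose_mul_self C with hhC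
  set μ := hC.eigenvalues with hμ
  obtain ⟨i₁, i₂, hne, hsv1, hsv2⟩ := srt_exists_two
    (fun i => Real.sqrt (μ i)) (by rw [Fintype.card_fin]; exact hn2)
  have hl1 : lam ≤ Real.sqrt (μ i₁) := le_trans hlam_le hsv1
  have hl2 : lam ≤ Real.sqrt (μ i₂) := le_trans hlam_le hsv2
  have hμ1pos : 0 < μ i₁ := by
    have := lt_of_lt_of_le hlam hl1
    nlinarith [Real.sq_sqrt (eigen_tmul_nonneg C i₁), Real.sqrt_nonneg (μ i₁)]
  have hμ2pos : 0 < μ i₂ := by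
    have := lt_of_lt_of_le hlam hl2
    nlinarith [Real.sq_sqrt (eigen_tmul_nonneg C i₂), Real.sqrt_nonneg (μ i₂)]
  set v₁ : Fin n → ℝ := ev hC i₁ with hv₁
  set v₂ : Fin n → ℝ := ev hC i₂ with hv₂
  set u₁ : Fin m → ℝ := fun i => (C *ᵥ v₁) i / Real.sqrt (μ i₁) with hu₁
  set u₂ : Fin m → ℝ := fun i => (C *ᵥ v₂) i / Real.sqrt (μ i₂) with hu₂
  have hsq1 : Real.sqrt (μ i₁) ^ 2 = μ i₁ := Real.sq_sqrt hμ1pos.le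
  have hsq2 : Real.sqrt (μ i₂) ^ 2 = μ i₂ := Real.sq_sqrt hμ2pos.le
  have hs1pos : 0 < Real.sqrt (μ i₁) := Real.sqrt_pos.2 hμ1pos
  have hs2pos : 0 < Real.sqrt (μ i₂) := Real.sqrt_pos.2 hμ2pos
  -- gram facts
  have g11 := gram_dot C i₁ i₁
  have g12 := gram_dot C i₁ i₂
  have g21 := gram_dot C i₂ i₁
  have g22 := gram_dot C i₂ i₂
  rw [if_pos rfl, mul_one] at g11 g22
  rw [if_neg hne, mul_zero] at g12
  rw [if_neg (Ne.symm hne), mul_zero] at g21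
  have hv11 : ∑ j, v₁ j * v₁ j = 1 := by
    have := eigen_orth hC i₁ i₁; rw [if_pos rfl] at this; exact this
  have hv22 : ∑ j, v₂ j * v₂ j = 1 := by
    have := eigen_orth hC i₂ i₂; rw [if_pos rfl] at this; exact this
  have hv12 : ∑ j, v₁ j * v₂ j = 0 := by
    have := eigen_orth hC i₁ i₂; rw [if_neg hne] at this; exact this
  have hu11 : ∑ i, u₁ i * u₁ i = 1 := by
    rw [hu₁]
    have : ∀ i, (C *ᵥ v₁) i / Real.sqrt (μ i₁) * ((C *ᵥ v₁) i / Real.sqrt (μ i₁))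
        = (C *ᵥ v₁) i * (C *ᵥ v₁) i / μ i₁ := by
      intro i
      rw [div_mul_div_comm, Real.mul_self_sqrt hμ1pos.le]
    rw [Finset.sum_congr rfl fun i _ => this i, ← Finset.sum_div, g11,
      div_self (ne_of_gt hμ1pos)]
  have hu22 : ∑ i, u₂ i * u₂ i = 1 := by
    rw [hu₂]
    have : ∀ i, (C *ᵥ v₂) i / Real.sqrt (μ i₂) * ((C *ᵥ v₂) i / Real.sqrt (μ i₂))
        = (C *ᵥ v₂) i * (C *ᵥ v₂) i / μ i₂ := by
      intro i
      rw [div_mul_div_comm, Real.mul_self_sqrt hμ2pos.le]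
    rw [Finset.sum_congr rfl fun i _ => this i, ← Finset.sum_div, g22,
      div_self (ne_of_gt hμ2pos)]
  have hu12 : ∑ i, u₁ i * u₂ i = 0 := by
    rw [hu₁, hu₂]
    have : ∀ i, (C *ᵥ v₁) i / Real.sqrt (μ i₁) * ((C *ᵥ v₂) i / Real.sqrt (μ i₂))
        = (C *ᵥ v₁) i * (C *ᵥ v₂) i / (Real.sqrt (μ i₁) * Real.sqrt (μ i₂)) := by
      intro i; rw [div_mul_div_comm]
    rw [Finset.sum_congr rfl fun i _ => this i, ← Finset.sum_div, g12, zero_div]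
  have huCv11 : ∑ i, u₁ i * (C *ᵥ v₁) i = Real.sqrt (μ i₁) := by
    rw [hu₁]
    have : ∀ i, (C *ᵥ v₁) i / Real.sqrt (μ i₁) * (C *ᵥ v₁) i
        = (C *ᵥ v₁) i * (C *ᵥ v₁) i / Real.sqrt (μ i₁) := by
      intro i; ring
    rw [Finset.sum_congr rfl fun i _ => this i, ← Finset.sum_div, g11]
    exact Real.div_sqrt
  have huCv22 : ∑ i, u₂ i * (C *ᵥ v₂) i = Real.sqrt (μ i₂) := by
    rw [hu₂]
    have : ∀ i, (C *ᵥ v₂) i / Real.sqrt (μ i₂) * (C *ᵥ v₂) i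
        = (C *ᵥ v₂) i * (C *ᵥ v₂) i / Real.sqrt (μ i₂) := by
      intro i; ring
    rw [Finset.sum_congr rfl fun i _ => this i, ← Finset.sum_div, g22]
    exact Real.div_sqrt
  have huCv12 : ∑ i, u₁ i * (C *ᵥ v₂) i = 0 := by
    rw [hu₁]
    have : ∀ i, (C *ᵥ v₁) i / Real.sqrt (μ i₁) * (C *ᵥ v₂) i
        = (C *ᵥ v₁) i * (C *ᵥ v₂) i / Real.sqrt (μ i₁) := by
      intro i; ring
    rw [Finset.sum_congr rfl fun i _ => this i, ← Finset.sum_div, g12, zero_div]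
  have huCv21 : ∑ i, u₂ i * (C *ᵥ v₁) i = 0 := by
    rw [hu₂]
    have : ∀ i, (C *ᵥ v₂) i / Real.sqrt (μ i₂) * (C *ᵥ v₁) i
        = (C *ᵥ v₂) i * (C *ᵥ v₁) i / Real.sqrt (μ i₂) := by
      intro i; ring
    rw [Finset.sum_congr rfl fun i _ => this i, ← Finset.sum_div, g21, zero_div]
  -- combination coefficients
  set f₁ : (Fin m ⊕ Fin n) → ℝ := Sum.elim u₁ v₁ with hf₁
  set f₂ : (Fin m ⊕ Fin n) → ℝ := Sum.elim u₂ v₂ with hf₂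
  set a : ℝ := ∑ x, f₁ x * w x with ha
  set b : ℝ := ∑ x, f₂ x * w x with hb
  obtain ⟨α, β, hαβ, horth⟩ : ∃ α β : ℝ, (α ^ 2 + β ^ 2 > 0) ∧ α * a + β * b = 0 := by
    by_cases hab : a = 0 ∧ b = 0
    · exact ⟨1, 0, by norm_num, by rw [hab.1, hab.2]; ring⟩
    · refine ⟨b, -a, ?_, by ring⟩
      rcases (not_and_or.1 hab) with h | h
      · have : 0 < a ^ 2 := by positivity
        nlinarith [sq_nonneg b]
      · have : 0 < b ^ 2 := by positivity
        nlinarith [sq_nonneg a]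
  set f : (Fin m ⊕ Fin n) → ℝ := fun x => α * f₁ x + β * f₂ x with hf
  refine ⟨f, ?_, ?_, ?_⟩
  · -- orthogonality
    have : ∑ x, f x * w x = α * a + β * b := by
      rw [ha, hb, Finset.mul_sum, Finset.mul_sum, ← Finset.sum_add_distrib]
      apply Finset.sum_congr rfl
      intro x _
      show (α * f₁ x + β * f₂ x) * w x = α * (f₁ x * w x) + β * (f₂ x * w x)
      ring
    rw [this, horth]
  · -- norm
    have hnorm : ∑ x, f x ^ 2 = 2 * (α ^ 2 + β ^ 2) := by
      have expand : ∀ x, f x ^ 2 = α ^ 2 * (f₁ x * f₁ x) + 2 * α * β * (f₁ x * f₂ x)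
          + β ^ 2 * (f₂ x * f₂ x) := by
        intro x
        show (α * f₁ x + β * f₂ x) ^ 2 = _
        ring
      rw [Finset.sum_congr rfl fun x _ => expand x]
      rw [Finset.sum_add_distrib, Finset.sum_add_distrib,
        ← Finset.mul_sum, ← Finset.mul_sum, ← Finset.mul_sum]
      have e11 : ∑ x, f₁ x * f₁ x = 2 := by
        rw [hf₁, Fintype.sum_sum_type]
        show (∑ i, u₁ i * u₁ i) + (∑ j, v₁ j * v₁ j) = 2
        rw [hu11, hv11]; norm_num
      have e22 : ∑ x, f₂ x * f₂ x = 2 := by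
        rw [hf₂, Fintype.sum_sum_type]
        show (∑ i, u₂ i * u₂ i) + (∑ j, v₂ j * v₂ j) = 2
        rw [hu22, hv22]; norm_num
      have e12 : ∑ x, f₁ x * f₂ x = 0 := by
        rw [hf₁, hf₂, Fintype.sum_sum_type]
        show (∑ i, u₁ i * u₂ i) + (∑ j, v₁ j * v₂ j) = 0
        rw [hu12, hv12]; norm_num
      rw [e11, e22, e12]
      ring
    rw [hnorm]
    positivity
  · -- quadratic form
    have hquad : ∑ i, ∑ j, C i j * f (Sum.inl i) * f (Sum.inr j)
        = α ^ 2 * Real.sqrt (μ i₁) + β ^ 2 * Real.sqrt (μ i₂) := by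
      have hfl : ∀ i, f (Sum.inl i) = α * u₁ i + β * u₂ i := fun i => rfl
      have hfr : ∀ j, f (Sum.inr j) = α * v₁ j + β * v₂ j := fun j => rfl
      have expand : ∀ i, ∑ j, C i j * f (Sum.inl i) * f (Sum.inr j)
          = α ^ 2 * (u₁ i * (C *ᵥ v₁) i) + α * β * (u₁ i * (C *ᵥ v₂) i)
            + α * β * (u₂ i * (C *ᵥ v₁) i) + β ^ 2 * (u₂ i * (C *ᵥ v₂) i) := by
        intro i
        have : ∀ j, C i j * f (Sum.inl i) * f (Sum.inr j)
            = α ^ 2 * (u₁ i * (C i j * v₁ j)) + α * β * (u₁ i * (C i j * v₂ j))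
              + α * β * (u₂ i * (C i j * v₁ j)) + β ^ 2 * (u₂ i * (C i j * v₂ j)) := by
          intro j
          rw [hfl i, hfr j]
          ring
        rw [Finset.sum_congr rfl fun j _ => this j]
        rw [Finset.sum_add_distrib, Finset.sum_add_distrib, Finset.sum_add_distrib]
        have mv : ∀ (vv : Fin n → ℝ), ∑ j, C i j * vv j = (C *ᵥ vv) i := fun vv => rfl
        rw [← Finset.mul_sum, ← Finset.mul_sum, ← Finset.mul_sum, ← Finset.mul_sum,
          ← Finset.mul_sum, ← Finset.mul_sum, ← Finset.mul_sum, ← Finset.mul_sum]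
        rw [mv v₁, mv v₂]
      rw [Finset.sum_congr rfl fun i _ => expand i]
      rw [Finset.sum_add_distrib, Finset.sum_add_distrib, Finset.sum_add_distrib]
      rw [← Finset.mul_sum, ← Finset.mul_sum, ← Finset.mul_sum, ← Finset.mul_sum]
      rw [huCv11, huCv22, huCv12, huCv21]
      ring
    rw [hquad]
    have hnorm : ∑ x, f x ^ 2 = 2 * (α ^ 2 + β ^ 2) := by
      have expand : ∀ x, f x ^ 2 = α ^ 2 * (f₁ x * f₁ x) + 2 * α * β * (f₁ x * f₂ x)
          + β ^ 2 * (f₂ x * f₂ x) := by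
        intro x
        show (α * f₁ x + β * f₂ x) ^ 2 = _
        ring
      rw [Finset.sum_congr rfl fun x _ => expand x]
      rw [Finset.sum_add_distrib, Finset.sum_add_distrib,
        ← Finset.mul_sum, ← Finset.mul_sum, ← Finset.mul_sum]
      have e11 : ∑ x, f₁ x * f₁ x = 2 := by
        rw [hf₁, Fintype.sum_sum_type]
        show (∑ i, u₁ i * u₁ i) + (∑ j, v₁ j * v₁ j) = 2
        rw [hu11, hv11]; norm_num
      have e22 : ∑ x, f₂ x * f₂ x = 2 := by
        rw [hf₂, Fintype.sum_sum_type]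
        show (∑ i, u₂ i * u₂ i) + (∑ j, v₂ j * v₂ j) = 2
        rw [hu22, hv22]; norm_num
      have e12 : ∑ x, f₁ x * f₂ x = 0 := by
        rw [hf₁, hf₂, Fintype.sum_sum_type]
        show (∑ i, u₁ i * u₂ i) + (∑ j, v₁ j * v₂ j) = 0
        rw [hu12, hv12]; norm_num
      rw [e11, e22, e12]
      ring
    rw [hnorm]
    have h1 : lam * (2 * (α ^ 2 + β ^ 2)) = 2 * (α ^ 2 * lam + β ^ 2 * lam) := by ring
    rw [h1]
    have h2 : α ^ 2 * lam ≤ α ^ 2 * Real.sqrt (μ i₁) :=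
      mul_le_mul_of_nonneg_left hl1 (sq_nonneg α)
    have h3 : β ^ 2 * lam ≤ β ^ 2 * Real.sqrt (μ i₂) :=
      mul_le_mul_of_nonneg_left hl2 (sq_nonneg β)
    linarith

end Spectral
section Compare

lemma Cop_norm_le {m n : ℕ} (B C : Matrix (Fin m) (Fin n) ℝ) (hB : ∀ i j, 0 ≤ B i j)
    (rr : Fin m → ℝ) (cc : Fin n → ℝ)
    (hrr : ∀ i, rr i = ∑ j, B i j) (hcc : ∀ j, cc j = ∑ i, B i j)
    (hrpos : ∀ i, 0 < rr i) (hcpos : ∀ j, 0 < cc j)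
    (hCdef : ∀ i j, C i j = B i j / (Real.sqrt (rr i) * Real.sqrt (cc j))) :
    ∀ v : Fin n → ℝ, ∑ i, (C *ᵥ v) i ^ 2 ≤ ∑ j, v j ^ 2 := by
  intro v
  have key : ∀ i, (C *ᵥ v) i ^ 2 ≤ ∑ j, B i j * v j ^ 2 / cc j := by
    intro i
    have hCS := Finset.sum_mul_sq_le_sq_mul_sq Finset.univ
      (fun j => Real.sqrt (B i j) / Real.sqrt (rr i))
      (fun j => Real.sqrt (B i j) * v j / Real.sqrt (cc j))
    have hfg : ∀ j, (Real.sqrt (B i j) / Real.sqrt (rr i))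
        * (Real.sqrt (B i j) * v j / Real.sqrt (cc j)) = C i j * v j := by
      intro j
      rw [div_mul_div_comm, ← mul_assoc, Real.mul_self_sqrt (hB i j), hCdef,
        div_mul_eq_mul_div]
    have hf2 : ∑ j, (Real.sqrt (B i j) / Real.sqrt (rr i)) ^ 2 = 1 := by
      have : ∀ j, (Real.sqrt (B i j) / Real.sqrt (rr i)) ^ 2 = B i j / rr i := by
        intro j
        rw [div_pow, Real.sq_sqrt (hB i j), Real.sq_sqrt (hrpos i).le]
      rw [Finset.sum_congr rfl fun j _ => this j, ← Finset.sum_div, ← hrr,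
        div_self (ne_of_gt (hrpos i))]
    have hg2 : ∀ j, (Real.sqrt (B i j) * v j / Real.sqrt (cc j)) ^ 2
        = B i j * v j ^ 2 / cc j := by
      intro j
      rw [div_pow, mul_pow, Real.sq_sqrt (hB i j), Real.sq_sqrt (hcpos j).le]
    have hmv : (C *ᵥ v) i = ∑ j, (Real.sqrt (B i j) / Real.sqrt (rr i))
        * (Real.sqrt (B i j) * v j / Real.sqrt (cc j)) := by
      rw [Finset.sum_congr rfl fun j _ => hfg j]
      rfl
    rw [hmv]
    calc (∑ j, (Real.sqrt (B i j) / Real.sqrt (rr i))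
          * (Real.sqrt (B i j) * v j / Real.sqrt (cc j))) ^ 2
        ≤ (∑ j, (Real.sqrt (B i j) / Real.sqrt (rr i)) ^ 2)
          * ∑ j, (Real.sqrt (B i j) * v j / Real.sqrt (cc j)) ^ 2 := hCS
      _ = ∑ j, B i j * v j ^ 2 / cc j := by
          rw [hf2, one_mul]
          exact Finset.sum_congr rfl fun j _ => hg2 j
  calc ∑ i, (C *ᵥ v) i ^ 2 ≤ ∑ i, ∑ j, B i j * v j ^ 2 / cc j :=
        Finset.sum_le_sum fun i _ => key i
    _ = ∑ j, v j ^ 2 := by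
        rw [Finset.sum_comm]
        apply Finset.sum_congr rfl
        intro j _
        have : ∀ i, B i j * v j ^ 2 / cc j = B i j * (v j ^ 2 / cc j) := by
          intro i; rw [mul_div_assoc]
        rw [Finset.sum_congr rfl fun i _ => this i, ← Finset.sum_mul, ← hcc,
          mul_comm, div_mul_cancel₀ _ (ne_of_gt (hcpos j))]

lemma svB_le_svC {m n : ℕ} (B C : Matrix (Fin m) (Fin n) ℝ) (hm : 0 < m) (hn2 : 2 ≤ n)
    (rr : Fin m → ℝ) (cc : Fin n → ℝ) (Rm Cm : ℝ)
    (hrpos : ∀ i, 0 < rr i) (hcpos : ∀ j, 0 < cc j)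
    (hrup : ∀ i, rr i ≤ Rm) (hcup : ∀ j, cc j ≤ Cm)
    (hfac : ∀ i j, B i j = Real.sqrt (rr i) * C i j * Real.sqrt (cc j)) :
    sv B 2 ^ 2 ≤ Rm * Cm * sv C 2 ^ 2 := by
  classical
  set hHB := Matrix.isHermitian_transpose_mul_self B with hhHB
  set hHC := Matrix.isHermitian_transpose_mul_self C with hhHC
  set μB := hHB.eigenvalues with hμB
  set μC := hHC.eigenvalues with hμC
  obtain ⟨j₁, j₂, hne, h1, h2⟩ := srt_exists_two
    (fun k => Real.sqrt (μB k)) (by rw [Fintype.card_fin]; exact hn2)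
  have hb1 : sv B 2 ^ 2 ≤ μB j₁ := by
    have := pow_le_pow_left₀ (sv_nonneg B 2) (h1 : sv B 2 ≤ _) 2
    rwa [Real.sq_sqrt (eigen_tmul_nonneg B j₁)] at this
  have hb2 : sv B 2 ^ 2 ≤ μB j₂ := by
    have := pow_le_pow_left₀ (sv_nonneg B 2) (h2 : sv B 2 ≤ _) 2
    rwa [Real.sq_sqrt (eigen_tmul_nonneg B j₂)] at this
  obtain ⟨i₀, htop⟩ := srt_exists_top
    (fun k => Real.sqrt (μC k)) (by rw [Fintype.card_fin]; omega)
  have hμCle : ∀ k, k ≠ i₀ → μC k ≤ sv C 2 ^ 2 := by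
    intro k hk
    have h3 : Real.sqrt (μC k) ≤ sv C 2 := htop k hk
    have := pow_le_pow_left₀ (Real.sqrt_nonneg (μC k)) h3 2
    rwa [Real.sq_sqrt (eigen_tmul_nonneg C k)] at this
  set e₁ : Fin n → ℝ := ev hHB j₁ with he₁
  set e₂ : Fin n → ℝ := ev hHB j₂ with he₂
  set w : Fin n → ℝ := fun j => Real.sqrt (cc j) * ev hHC i₀ j with hw
  set a : ℝ := ∑ j, e₁ j * w j with ha
  set b : ℝ := ∑ j, e₂ j * w j with hb
  obtain ⟨α, β, hαβ, horth⟩ : ∃ α β : ℝ, (α ^ 2 + β ^ 2 > 0) ∧ α * a + β * b = 0 := by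
    by_cases hab : a = 0 ∧ b = 0
    · exact ⟨1, 0, by norm_num, by rw [hab.1, hab.2]; ring⟩
    · refine ⟨b, -a, ?_, by ring⟩
      rcases (not_and_or.1 hab) with h | h
      · have : 0 < a ^ 2 := by positivity
        nlinarith [sq_nonneg b]
      · have : 0 < b ^ 2 := by positivity
        nlinarith [sq_nonneg a]
  set v : Fin n → ℝ := fun j => α * e₁ j + β * e₂ j with hv
  have hvw : ∑ j, v j * w j = 0 := by
    have : ∑ j, v j * w j = α * a + β * b := by
      rw [ha, hb, Finset.mul_sum, Finset.mul_sum, ← Finset.sum_add_distrib]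
      apply Finset.sum_congr rfl
      intro j _
      show (α * e₁ j + β * e₂ j) * w j = α * (e₁ j * w j) + β * (e₂ j * w j)
      ring
    rw [this, horth]
  -- eigen/gram facts for B
  have gB11 := gram_dot B j₁ j₁
  have gB12 := gram_dot B j₁ j₂
  have gB21 := gram_dot B j₂ j₁
  have gB22 := gram_dot B j₂ j₂
  rw [if_pos rfl, mul_one] at gB11 gB22
  rw [if_neg hne, mul_zero] at gB12
  rw [if_neg (Ne.symm hne), mul_zero] at gB21
  have he11 : ∑ j, e₁ j * e₁ j = 1 := by
    have := eigen_orth hHB j₁ j₁; rw [if_pos rfl] at this; exact this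
  have he22 : ∑ j, e₂ j * e₂ j = 1 := by
    have := eigen_orth hHB j₂ j₂; rw [if_pos rfl] at this; exact this
  have he12 : ∑ j, e₁ j * e₂ j = 0 := by
    have := eigen_orth hHB j₁ j₂; rw [if_neg hne] at this; exact this
  have hv2 : ∑ j, v j ^ 2 = α ^ 2 + β ^ 2 := by
    have expand : ∀ j, v j ^ 2 = α ^ 2 * (e₁ j * e₁ j) + 2 * α * β * (e₁ j * e₂ j)
        + β ^ 2 * (e₂ j * e₂ j) := by
      intro j
      show (α * e₁ j + β * e₂ j) ^ 2 = _
      ring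
    rw [Finset.sum_congr rfl fun j _ => expand j, Finset.sum_add_distrib,
      Finset.sum_add_distrib, ← Finset.mul_sum, ← Finset.mul_sum, ← Finset.mul_sum,
      he11, he22, he12]
    ring
  have hBv : ∀ i, (B *ᵥ v) i = α * (B *ᵥ e₁) i + β * (B *ᵥ e₂) i := by
    intro i
    show ∑ j, B i j * v j = α * ∑ j, B i j * e₁ j + β * ∑ j, B i j * e₂ j
    rw [Finset.mul_sum, Finset.mul_sum, ← Finset.sum_add_distrib]
    apply Finset.sum_congr rfl
    intro j _
    show B i j * (α * e₁ j + β * e₂ j) = α * (B i j * e₁ j) + β * (B i j * e₂ j)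
    ring
  have hlow : sv B 2 ^ 2 * (α ^ 2 + β ^ 2) ≤ ∑ i, (B *ᵥ v) i ^ 2 := by
    have expand : ∀ i, (B *ᵥ v) i ^ 2
        = α ^ 2 * ((B *ᵥ e₁) i * (B *ᵥ e₁) i) + 2 * α * β * ((B *ᵥ e₁) i * (B *ᵥ e₂) i)
          + β ^ 2 * ((B *ᵥ e₂) i * (B *ᵥ e₂) i) := by
      intro i
      rw [hBv i]
      ring
    rw [Finset.sum_congr rfl fun i _ => expand i, Finset.sum_add_distrib,
      Finset.sum_add_distrib, ← Finset.mul_sum, ← Finset.mul_sum, ← Finset.mul_sum,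
      gB11, gB12, gB22]
    have hq1 : sv B 2 ^ 2 * α ^ 2 ≤ α ^ 2 * μB j₁ := by
      rw [mul_comm]
      exact mul_le_mul_of_nonneg_left hb1 (sq_nonneg α)
    have hq2 : sv B 2 ^ 2 * β ^ 2 ≤ β ^ 2 * μB j₂ := by
      rw [mul_comm]
      exact mul_le_mul_of_nonneg_left hb2 (sq_nonneg β)
    nlinarith [hq1, hq2]
  -- upper bound via C
  set v' : Fin n → ℝ := fun j => Real.sqrt (cc j) * v j with hv'
  have hBvC : ∀ i, (B *ᵥ v) i = Real.sqrt (rr i) * (C *ᵥ v') i := by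
    intro i
    show ∑ j, B i j * v j = Real.sqrt (rr i) * ∑ j, C i j * v' j
    rw [Finset.mul_sum]
    apply Finset.sum_congr rfl
    intro j _
    rw [hfac i j, hv']
    show Real.sqrt (rr i) * C i j * Real.sqrt (cc j) * v j
      = Real.sqrt (rr i) * (C i j * (Real.sqrt (cc j) * v j))
    ring
  have hup1 : ∑ i, (B *ᵥ v) i ^ 2 ≤ Rm * ∑ i, (C *ᵥ v') i ^ 2 := by
    have hstep : ∀ i, (B *ᵥ v) i ^ 2 ≤ Rm * (C *ᵥ v') i ^ 2 := by
      intro i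
      rw [hBvC i, mul_pow, Real.sq_sqrt (hrpos i).le]
      exact mul_le_mul_of_nonneg_right (hrup i) (sq_nonneg _)
    calc ∑ i, (B *ᵥ v) i ^ 2 ≤ ∑ i, Rm * (C *ᵥ v') i ^ 2 :=
          Finset.sum_le_sum fun i _ => hstep i
      _ = Rm * ∑ i, (C *ᵥ v') i ^ 2 := (Finset.mul_sum _ _ _).symm
  have hq : ∑ i, (C *ᵥ v') i ^ 2 = ∑ k, μC k * (∑ j, ev hHC k j * v' j) ^ 2 := by
    have h0 : ∑ i, (C *ᵥ v') i ^ 2 = ∑ i, (C *ᵥ v') i * (C *ᵥ v') i :=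
      Finset.sum_congr rfl fun i _ => sq _
    rw [h0, dot_CC]
    exact quad_expand hHC v'
  have hw0 : ∑ j, ev hHC i₀ j * v' j = 0 := by
    rw [← hvw]
    apply Finset.sum_congr rfl
    intro j _
    rw [hv', hw]
    show ev hHC i₀ j * (Real.sqrt (cc j) * v j) = v j * (Real.sqrt (cc j) * ev hHC i₀ j)
    ring
  have hup2 : ∑ k, μC k * (∑ j, ev hHC k j * v' j) ^ 2
      ≤ sv C 2 ^ 2 * ∑ k, (∑ j, ev hHC k j * v' j) ^ 2 := by
    rw [Finset.mul_sum]
    apply Finset.sum_le_sum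
    intro k _
    by_cases hk : k = i₀
    · subst hk
      rw [hw0]
      simp
    · exact mul_le_mul_of_nonneg_right (hμCle k hk) (sq_nonneg _)
  have hpar : ∑ k, (∑ j, ev hHC k j * v' j) ^ 2 = ∑ j, v' j ^ 2 :=
    (parseval_sq hHC v').symm
  have hup3 : ∑ j, v' j ^ 2 ≤ Cm * ∑ j, v j ^ 2 := by
    have hstep : ∀ j, v' j ^ 2 ≤ Cm * v j ^ 2 := by
      intro j
      rw [hv']
      show (Real.sqrt (cc j) * v j) ^ 2 ≤ Cm * v j ^ 2
      rw [mul_pow, Real.sq_sqrt (hcpos j).le]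
      exact mul_le_mul_of_nonneg_right (hcup j) (sq_nonneg _)
    calc ∑ j, v' j ^ 2 ≤ ∑ j, Cm * v j ^ 2 := Finset.sum_le_sum fun j _ => hstep j
      _ = Cm * ∑ j, v j ^ 2 := (Finset.mul_sum _ _ _).symm
  have hRm0 : 0 ≤ Rm := le_trans (hrpos ⟨0, by omega⟩).le (hrup _)
  have hCm0 : 0 ≤ Cm := le_trans (hcpos ⟨0, by omega⟩).le (hcup _)
  have chain : sv B 2 ^ 2 * (α ^ 2 + β ^ 2) ≤ (Rm * Cm * sv C 2 ^ 2) * (α ^ 2 + β ^ 2) := by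
    calc sv B 2 ^ 2 * (α ^ 2 + β ^ 2) ≤ ∑ i, (B *ᵥ v) i ^ 2 := hlow
      _ ≤ Rm * ∑ i, (C *ᵥ v') i ^ 2 := hup1
      _ = Rm * ∑ k, μC k * (∑ j, ev hHC k j * v' j) ^ 2 := by rw [hq]
      _ ≤ Rm * (sv C 2 ^ 2 * ∑ k, (∑ j, ev hHC k j * v' j) ^ 2) :=
          mul_le_mul_of_nonneg_left hup2 hRm0
      _ = Rm * (sv C 2 ^ 2 * ∑ j, v' j ^ 2) := by rw [hpar]
      _ ≤ Rm * (sv C 2 ^ 2 * (Cm * ∑ j, v j ^ 2)) := by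
          apply mul_le_mul_of_nonneg_left _ hRm0
          exact mul_le_mul_of_nonneg_left hup3 (sq_nonneg _)
      _ = (Rm * Cm * sv C 2 ^ 2) * (α ^ 2 + β ^ 2) := by rw [hv2]; ring
  exact le_of_mul_le_mul_right chain hαβ

end Compare
/-- for an ε-nearly doubly balanced non-negative matrix `B` with `ε ≤ 1/2`,
`σ₂(B) ≤ (1 − φ(G_B)²/2 + 3ε) · s(B)/√(mn)`. -/
theorem stmt16 {m n : ℕ} (hm : 0 < m) (hn : 0 < n)
    (B : Matrix (Fin m) (Fin n) ℝ) (ε : ℝ) (hε0 : 0 ≤ ε) (hε : ε ≤ 1 / 2)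
    (hB : ∀ i j, 0 ≤ B i j)
    (s : ℝ) (hs : s = ∑ i, ∑ j, B i j)
    (hrow : ∀ i, (1 - ε) * s / m ≤ ∑ j, B i j ∧ ∑ j, B i j ≤ (1 + ε) * s / m)
    (hcol : ∀ j, (1 - ε) * s / n ≤ ∑ i, B i j ∧ ∑ i, B i j ≤ (1 + ε) * s / n) :
    sv B 2 ≤ (1 - bipConductance B ^ 2 / 2 + 3 * ε) * s / Real.sqrt (m * n) := by
  classical
  have hs0 : 0 ≤ s := by
    rw [hs]
    exact Finset.sum_nonneg fun i _ => Finset.sum_nonneg fun j _ => hB i j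
  rcases eq_or_lt_of_le hs0 with hs_eq | hspos
  · -- degenerate case s = 0
    have hB0 : B = 0 := by
      ext i j
      have hsum : ∑ i, ∑ j, B i j = 0 := by rw [← hs, ← hs_eq]
      have h1 : ∀ i ∈ Finset.univ, (0:ℝ) ≤ ∑ j, B i j :=
        fun i _ => Finset.sum_nonneg fun j _ => hB i j
      have h2 := (Finset.sum_eq_zero_iff_of_nonneg h1).1 hsum i (Finset.mem_univ i)
      have h3 := (Finset.sum_eq_zero_iff_of_nonneg (fun j _ => hB i j)).1 h2 j (Finset.mem_univ j)
      exact h3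
    have hμ0 : ∀ i, (Matrix.isHermitian_transpose_mul_self B).eigenvalues i = 0 := by
      intro i
      set hH := Matrix.isHermitian_transpose_mul_self B with hhH
      have hM : Bᴴ * B = 0 := by rw [hB0]; simp
      have hmv := ev_mulVec hH i
      have h0 : (Bᴴ * B) *ᵥ ev hH i = 0 := by
        have hall : ∀ v : Fin n → ℝ, (Bᴴ * B) *ᵥ v = 0 := by
          intro v; rw [hM, Matrix.zero_mulVec]
        exact hall _
      have hz2 : (fun i_1 => hH.eigenvalues i * ev hH i i_1) = (0 : Fin n → ℝ) := by
        rw [← hmv]; exact h0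
      have horth := eigen_orth hH i i
      rw [if_pos rfl] at horth
      by_contra hne
      have hzero : ∀ x, ev hH i x = 0 := by
        intro x
        have := congrFun hz2 x
        simp only [Pi.zero_apply] at this
        rcases mul_eq_zero.1 this with h | h
        · exact absurd h hne
        · exact h
      rw [Finset.sum_eq_zero (fun x _ => by rw [hzero x]; ring)] at horth
      norm_num at horth
    have hsv : sv B 2 = 0 := by
      refine le_antisymm ?_ (sv_nonneg B 2)
      rw [sv_eq_getD]
      apply srt_getD_le _ 0 le_rfl
      intro i
      rw [hμ0 i, Real.sqrt_zero]
    rw [hsv, ← hs_eq]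
    rw [mul_zero, zero_div]
  · -- main case s > 0
    have hφ0 : 0 ≤ bipConductance B := bipConductance_nonneg B hB
    have hφ1 : bipConductance B ≤ 1 := bipConductance_le_one B hB hm s hs hspos
    have hm0 : (0:ℝ) < (m:ℝ) := Nat.cast_pos.2 hm
    have hn0 : (0:ℝ) < (n:ℝ) := Nat.cast_pos.2 hn
    have hsqmn : 0 < Real.sqrt ((m:ℝ) * n) := Real.sqrt_pos.2 (by positivity)
    have hrpos : ∀ i, 0 < ∑ j, B i j := by
      intro i
      have h1 : 0 < (1 - ε) * s / m := by
        apply div_pos _ hm0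
        apply mul_pos _ hspos
        linarith
      exact lt_of_lt_of_le h1 (hrow i).1
    have hcpos : ∀ j, 0 < ∑ i, B i j := by
      intro j
      have h1 : 0 < (1 - ε) * s / n := by
        apply div_pos _ hn0
        apply mul_pos _ hspos
        linarith
      exact lt_of_lt_of_le h1 (hcol j).1
    rcases eq_or_lt_of_le (sv_nonneg B 2) with hsv0 | hsvpos
    · rw [← hsv0]
      have hcoef : 0 ≤ 1 - bipConductance B ^ 2 / 2 + 3 * ε := by nlinarith
      exact div_nonneg (mul_nonneg hcoef hs0) (Real.sqrt_nonneg _)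
    · -- sv B 2 > 0
      have hn2 : 2 ≤ n := by
        by_contra h
        push_neg at h
        have hlen : (srt (fun i =>
            Real.sqrt ((Matrix.isHermitian_transpose_mul_self B).eigenvalues i))).length = n := by
          rw [srt_length, Fintype.card_fin]
        have hz : sv B 2 = 0 := by
          rw [sv_eq_getD, List.getD_eq_default]
          rw [hlen]
          omega
        rw [hz] at hsvpos
        exact lt_irrefl 0 hsvpos
      set C : Matrix (Fin m) (Fin n) ℝ := Matrix.of fun i j =>
        B i j / (Real.sqrt (∑ j', B i j') * Real.sqrt (∑ i', B i' j)) with hCdefn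
      have hCdef : ∀ i j, C i j
          = B i j / (Real.sqrt (∑ j', B i j') * Real.sqrt (∑ i', B i' j)) := fun i j => rfl
      have hfac : ∀ i j, B i j
          = Real.sqrt (∑ j', B i j') * C i j * Real.sqrt (∑ i', B i' j) := by
        intro i j
        rw [hCdef i j]
        have h1 : Real.sqrt (∑ j', B i j') ≠ 0 := ne_of_gt (Real.sqrt_pos.2 (hrpos i))
        have h2 : Real.sqrt (∑ i', B i' j) ≠ 0 := ne_of_gt (Real.sqrt_pos.2 (hcpos j))
        field_simp
      have hkey1 : sv B 2 ^ 2 ≤ ((1+ε)*s/m) * ((1+ε)*s/n) * sv C 2 ^ 2 :=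
        svB_le_svC B C hm hn2 (fun i => ∑ j, B i j) (fun j => ∑ i, B i j)
          ((1+ε)*s/m) ((1+ε)*s/n) hrpos hcpos (fun i => (hrow i).2) (fun j => (hcol j).2) hfac
      have hopC := Cop_norm_le B C hB (fun i => ∑ j, B i j) (fun j => ∑ i, B i j)
        (fun i => rfl) (fun j => rfl) hrpos hcpos hCdef
      have hC1 : sv C 2 ≤ 1 := sv_le_one C hopC 2
      have hCnn : 0 ≤ sv C 2 := sv_nonneg C 2
      have hlampos : 0 < sv C 2 := by
        rcases eq_or_lt_of_le hCnn with h | h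
        · exfalso
          rw [← h] at hkey1
          nlinarith
        · exact h
      have hdpos : ∀ x, 0 < bipDeg B x := by
        intro x
        rcases x with i | j
        · rw [bipDeg_inl]; exact hrpos i
        · rw [bipDeg_inr]; exact hcpos j
      obtain ⟨f, hfw, hfpos, hfq⟩ := exists_test_vector C hn2 (sv C 2) hlampos le_rfl
        (fun x => Real.sqrt (bipDeg B x))
      have hfq' : sv C 2 * ∑ x, f x ^ 2 ≤ 2 * ∑ i, ∑ j,
          (B i j / (Real.sqrt (bipDeg B (Sum.inl i)) * Real.sqrt (bipDeg B (Sum.inr j))))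
            * f (Sum.inl i) * f (Sum.inr j) := by
        refine le_trans hfq (le_of_eq ?_)
        congr 1
        apply Finset.sum_congr rfl
        intro i _
        apply Finset.sum_congr rfl
        intro j _
        rw [bipDeg_inl, bipDeg_inr, ← hCdef i j]
      obtain ⟨x, hxmem, hx2⟩ := cheeger_main hm hn B hB hdpos (sv C 2) hC1 f hfw hfpos hfq'
      have hφle : bipConductance B ≤ x := bipConductance_le B hB hxmem
      have hx0 : 0 ≤ x := condSet_nonneg B hB x hxmem
      have hφ2 : bipConductance B ^ 2 ≤ 2 * (1 - sv C 2) := by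
        calc bipConductance B ^ 2 ≤ x ^ 2 := pow_le_pow_left₀ hφ0 hφle 2
          _ ≤ 2 * (1 - sv C 2) := hx2
      have hlam_le : sv C 2 ≤ 1 - bipConductance B ^ 2 / 2 := by linarith
      -- convert hkey1 into a linear bound
      have hcoefpos : 0 < (1+ε) * s / Real.sqrt ((m:ℝ)*n) := by
        apply div_pos _ hsqmn
        apply mul_pos _ hspos
        linarith
      have hsvB : sv B 2 ≤ (1+ε) * s / Real.sqrt ((m:ℝ)*n) * sv C 2 := by
        have hsq : ((1+ε) * s / Real.sqrt ((m:ℝ)*n) * sv C 2) ^ 2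
            = ((1+ε)*s/m) * ((1+ε)*s/n) * sv C 2 ^ 2 := by
          rw [mul_pow, div_pow, Real.sq_sqrt (by positivity : (0:ℝ) ≤ (m:ℝ)*n)]
          field_simp
        have h1 : sv B 2 ^ 2 ≤ ((1+ε) * s / Real.sqrt ((m:ℝ)*n) * sv C 2) ^ 2 := by
          rw [hsq]; exact hkey1
        have h2 : 0 ≤ (1+ε) * s / Real.sqrt ((m:ℝ)*n) * sv C 2 :=
          mul_nonneg hcoefpos.le hCnn
        nlinarith [sv_nonneg B 2]
      calc sv B 2 ≤ (1+ε) * s / Real.sqrt ((m:ℝ)*n) * sv C 2 := hsvB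
        _ ≤ (1+ε) * s / Real.sqrt ((m:ℝ)*n) * (1 - bipConductance B ^ 2 / 2) :=
            mul_le_mul_of_nonneg_left hlam_le hcoefpos.le
        _ ≤ (1 - bipConductance B ^ 2 / 2 + 3 * ε) * s / Real.sqrt ((m:ℝ)*n) := by
            rw [div_mul_eq_mul_div]
            apply (div_le_div_iff_of_pos_right hsqmn).2
            nlinarith [mul_nonneg (mul_nonneg hε0 (sq_nonneg (bipConductance B))) hs0,
              mul_nonneg hε0 hs0]
end
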